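/- arXiv:2007.01808 — 8 statements merged into one kernel-verified Lean document; each statement's English description precedes it below -/
import Mathlib

section
/- For every k > 1, the number 2·p_{k−1} occurs as a difference between consecutive positive integers coprime to p_k#; that is, 2·p_{k−1} ∈ D(k). -/
namespace PrimorialDifferences

/-- The k-th primorial: product of the first k primes (p_1 = 2 is `Nat.nth Nat.Prime 0`). -/
noncomputable def primorial (k : ℕ) : ℕ := ∏ i ∈ Finset.range k, Nat.nth Nat.Prime i

/-- `memD k m` : `m` is a difference between consecutive positive integers coprime to `primorial k`. -/
def memD (k m : ℕ) : Prop :=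
  ∃ x : ℕ, 0 < x ∧ Nat.gcd x (primorial k) = 1 ∧ Nat.gcd (x + m) (primorial k) = 1 ∧
    ∀ j : ℕ, 0 < j → j < m → 1 < Nat.gcd (x + j) (primorial k)

lemma nth_prime_strictMono {a b : ℕ} (h : a < b) :
    Nat.nth Nat.Prime a < Nat.nth Nat.Prime b :=
  (Nat.nth_lt_nth Nat.infinite_setOf_prime).mpr h

lemma dvd_primorial_of_lt {p n : ℕ} (hp : p.Prime) (h : p < Nat.nth Nat.Prime n) :
    p ∣ primorial n := by
  have hc := Nat.nth_count hp
  have hlt : Nat.count Nat.Prime p < n := by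
    by_contra hle
    push_neg at hle
    rcases lt_or_eq_of_le hle with h1 | h1
    · exact absurd (hc ▸ nth_prime_strictMono h1) (by omega)
    · rw [← h1] at hc; omega
  calc p = Nat.nth Nat.Prime (Nat.count Nat.Prime p) := hc.symm
    _ ∣ primorial n := Finset.dvd_prod_of_mem _ (Finset.mem_range.mpr hlt)

lemma nth_dvd_primorial {i n : ℕ} (h : i < n) : Nat.nth Nat.Prime i ∣ primorial n :=
  Finset.dvd_prod_of_mem _ (Finset.mem_range.mpr h)

lemma coprime_primorial_nth {n m : ℕ} (h : n ≤ m) :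
    Nat.Coprime (primorial n) (Nat.nth Nat.Prime m) := by
  apply Nat.Coprime.prod_left
  intro i hi
  rw [Finset.mem_range] at hi
  exact (Nat.coprime_primes (Nat.prime_nth_prime i) (Nat.prime_nth_prime m)).mpr
    (ne_of_lt (nth_prime_strictMono (by omega)))

lemma two_dvd_primorial {n : ℕ} (hn : 0 < n) : 2 ∣ primorial n := by
  have h0 : Nat.nth Nat.Prime 0 = 2 := by
    have := Nat.nth_count (p := Nat.Prime) (n := 2) (by norm_num)
    simpa [show Nat.count Nat.Prime 2 = 0 by decide] using this
  exact h0 ▸ nth_dvd_primorial hn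

theorem two_mul_prime_mem_D (k : ℕ) (hk : 1 < k) :
    memD k (2 * Nat.nth Nat.Prime (k - 2)) := by
  obtain ⟨n, rfl⟩ : ∃ n, k = n + 2 := ⟨k - 2, by omega⟩
  have hidx : n + 2 - 2 = n := by omega
  rw [hidx]
  have h0 : Nat.nth Nat.Prime 0 = 2 := by
    have := Nat.nth_count (p := Nat.Prime) (n := 2) (by norm_num)
    simpa [show Nat.count Nat.Prime 2 = 0 by decide] using this
  rcases Nat.eq_zero_or_pos n with rfl | hn
  · -- k = 2 : primorial 2 = 6, gap 4 starting at x = 1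
    have h1 : Nat.nth Nat.Prime 1 = 3 := by
      have := Nat.nth_count (p := Nat.Prime) (n := 3) (by norm_num)
      simpa [show Nat.count Nat.Prime 3 = 1 by decide] using this
    have hM : primorial 2 = 6 := by
      rw [primorial, Finset.prod_range_succ, Finset.prod_range_one, h0, h1]; norm_num
    refine ⟨1, one_pos, ?_, ?_, ?_⟩
    · rw [hM]; decide
    · rw [hM, h0]; decide
    · intro j hj1 hj2
      rw [h0] at hj2
      rw [hM]
      interval_cases j <;> decide
  · -- k ≥ 3
    set q := Nat.nth Nat.Prime n with hqdef
    set r := Nat.nth Nat.Prime (n + 1) with hrdef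
    set P := primorial n with hPdef
    have hq : q.Prime := Nat.prime_nth_prime n
    have hr : r.Prime := Nat.prime_nth_prime (n + 1)
    have hqr : q < r := nth_prime_strictMono (by omega)
    have hq2 : 2 < q := by
      have := nth_prime_strictMono hn
      rw [h0] at this; omega
    have hqodd : ¬ 2 ∣ q := by
      intro h
      rcases (Nat.Prime.eq_one_or_self_of_dvd hq 2 h) with h' | h' <;> omega
    have hr_gt : q + 1 < r := by
      rcases lt_or_eq_of_le (Nat.succ_le_of_lt hqr) with h' | h'
      · exact h'
      · exfalso
        have h2r : 2 ∣ r := by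
          rw [← h', Nat.succ_eq_add_one]
          omega
        rcases (Nat.Prime.eq_one_or_self_of_dvd hr 2 h2r) with h'' | h'' <;> omega
    have hM : primorial (n + 2) = P * q * r := by
      rw [primorial, Finset.prod_range_succ, Finset.prod_range_succ]
      rfl
    have hPq : Nat.Coprime P q := coprime_primorial_nth le_rfl
    have hPr : Nat.Coprime P r := coprime_primorial_nth (by omega)
    have hqrc : Nat.Coprime q r := (Nat.coprime_primes hq hr).mpr (ne_of_lt hqr)
    have hPqr : Nat.Coprime P (q * r) := Nat.Coprime.mul_right hPq hPr
    obtain ⟨c₀, hc₀q, hc₀r⟩ := Nat.chineseRemainder hqrc 1 (r - 1)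
    obtain ⟨c₁, hc₁P, hc₁qr⟩ := Nat.chineseRemainder hPqr 0 c₀
    set M := P * q * r with hMdef
    have hqM : q ∣ M := ⟨P * r, by ring⟩
    have hrM : r ∣ M := ⟨P * q, by ring⟩
    have hPM : P ∣ M := ⟨q * r, by ring⟩
    set C := c₁ + M with hCdef
    have hPpos : 0 < P := by
      rw [hPdef, primorial]
      exact Finset.prod_pos fun i _ => (Nat.prime_nth_prime i).pos
    have hMpos : 0 < M := Nat.mul_pos (Nat.mul_pos hPpos hq.pos) hr.pos
    have hcongr : ∀ t : ℕ, t ∣ M → c₁ ≡ C [MOD t] := fun t ht =>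
      (Nat.modEq_iff_dvd' (by omega)).mpr (by rwa [show C - c₁ = M by omega])
    -- congruences for C
    have hCP : P ∣ C := by
      have h1 : P ∣ c₁ := Nat.modEq_zero_iff_dvd.mp hc₁P
      exact Nat.dvd_add h1 hPM
    have hCq : C ≡ 1 [MOD q] := by
      have h1 : c₁ ≡ 1 [MOD q] :=
        (hc₁qr.of_dvd (dvd_mul_right q r)).trans hc₀q
      exact (hcongr q hqM).symm.trans h1
    have hCr : C ≡ r - 1 [MOD r] := by
      have h1 : c₁ ≡ r - 1 [MOD r] :=
        (hc₁qr.of_dvd (dvd_mul_left r q)).trans hc₀r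
      exact (hcongr r hrM).symm.trans h1
    have hCpos : 1 ≤ C := by omega
    have hqdvd : q ∣ C - 1 := (Nat.modEq_iff_dvd' hCpos).mp hCq.symm
    have hrdvd : r ∣ C + 1 := by
      have h2 : C + 1 ≡ (r - 1) + 1 [MOD r] := hCr.add_right 1
      have h3 : (r - 1) + 1 = r := by omega
      rw [h3] at h2
      have h4 : C + 1 ≡ 0 [MOD r] := h2.trans (Nat.modEq_zero_iff_dvd.mpr dvd_rfl)
      exact Nat.modEq_zero_iff_dvd.mp h4
    have h2P : 2 ∣ P := two_dvd_primorial hn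
    have h2C : 2 ∣ C := dvd_trans h2P hCP
    -- C is big enough
    have hqC : q + 1 < C := by
      have h1 : q * r ≤ M := by
        calc q * r = 1 * (q * r) := by ring
          _ ≤ P * (q * r) := Nat.mul_le_mul_right _ hPpos
          _ = M := by ring
      have h2 : q + 1 < q * r := by nlinarith
      omega
    refine ⟨C - q, by omega, ?_, ?_, ?_⟩
    · -- gcd (C - q) M = 1
      rw [hM]
      refine Nat.Coprime.mul_right (Nat.Coprime.mul_right ?_ ?_) ?_
      · apply Nat.Coprime.prod_right
        intro i hi
        rw [Finset.mem_range] at hi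
        set p := Nat.nth Nat.Prime i with hpdef
        have hp : p.Prime := Nat.prime_nth_prime i
        refine ((hp.coprime_iff_not_dvd).mpr ?_).symm
        intro hdvd
        have hpP : p ∣ P := nth_dvd_primorial hi
        have hpC : p ∣ C := dvd_trans hpP hCP
        have : p ∣ q := by
          have := Nat.dvd_sub hpC hdvd
          rwa [show C - (C - q) = q by omega] at this
        have hpq : p = q := (Nat.prime_dvd_prime_iff_eq hp hq).mp this
        have : p < q := nth_prime_strictMono hi
        omega
      · refine ((hq.coprime_iff_not_dvd).mpr ?_).symm
        intro hdvd
        have hqC' : q ∣ C := by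
          have := Nat.dvd_add hdvd (dvd_refl q)
          rwa [show C - q + q = C by omega] at this
        have : q ∣ 1 := by
          have := Nat.dvd_sub hqC' hqdvd
          rwa [show C - (C - 1) = 1 by omega] at this
        exact Nat.Prime.one_lt hq |>.ne' (Nat.dvd_one.mp this)
      · refine ((hr.coprime_iff_not_dvd).mpr ?_).symm
        intro hdvd
        have : r ∣ q + 1 := by
          have := Nat.dvd_sub hrdvd hdvd
          rwa [show C + 1 - (C - q) = q + 1 by omega] at this
        have := Nat.le_of_dvd (by omega) this
        omega
    · -- gcd (C - q + 2*q) M = 1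
      rw [hM, show C - q + 2 * q = C + q by omega]
      refine Nat.Coprime.mul_right (Nat.Coprime.mul_right ?_ ?_) ?_
      · apply Nat.Coprime.prod_right
        intro i hi
        rw [Finset.mem_range] at hi
        set p := Nat.nth Nat.Prime i with hpdef
        have hp : p.Prime := Nat.prime_nth_prime i
        refine ((hp.coprime_iff_not_dvd).mpr ?_).symm
        intro hdvd
        have hpC : p ∣ C := dvd_trans (nth_dvd_primorial hi) hCP
        have : p ∣ q := by
          have := Nat.dvd_sub hdvd hpC
          rwa [show C + q - C = q by omega] at this
        have hpq : p = q := (Nat.prime_dvd_prime_iff_eq hp hq).mp this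
        have : p < q := nth_prime_strictMono hi
        omega
      · refine ((hq.coprime_iff_not_dvd).mpr ?_).symm
        intro hdvd
        have hqC' : q ∣ C := by
          have := Nat.dvd_sub hdvd (dvd_refl q)
          rwa [show C + q - q = C by omega] at this
        have : q ∣ 1 := by
          have := Nat.dvd_sub hqC' hqdvd
          rwa [show C - (C - 1) = 1 by omega] at this
        exact Nat.Prime.one_lt hq |>.ne' (Nat.dvd_one.mp this)
      · refine ((hr.coprime_iff_not_dvd).mpr ?_).symm
        intro hdvd
        have : r ∣ q - 1 := by
          have := Nat.dvd_sub hdvd hrdvd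
          rwa [show C + q - (C + 1) = q - 1 by omega] at this
        have := Nat.le_of_dvd (by omega) this
        omega
    · -- interior values share a factor with M
      intro j hj1 hj2
      rw [hM]
      have key : ∀ y p : ℕ, 1 < p → p ∣ y → p ∣ M → 1 < Nat.gcd y M := by
        intro y p hp h1 h2
        exact lt_of_lt_of_le hp
          (Nat.le_of_dvd (Nat.gcd_pos_of_pos_right _ hMpos) (Nat.dvd_gcd h1 h2))
      rcases eq_or_ne j q with rfl | hjq
      · -- middle point : divisible by 2
        rw [show C - q + q = C by omega]
        exact key C 2 (by omega) h2C (dvd_trans h2P hPM)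
      rcases eq_or_ne j (q - 1) with rfl | hjq1
      · rw [show C - q + (q - 1) = C - 1 by omega]
        exact key (C - 1) q hq.one_lt hqdvd hqM
      rcases eq_or_ne j (q + 1) with rfl | hjq2
      · rw [show C - q + (q + 1) = C + 1 by omega]
        exact key (C + 1) r hr.one_lt hrdvd hrM
      rcases lt_or_gt_of_ne hjq with hlt | hgt
      · -- j < q : y = C - d with d = q - j, 2 ≤ d ≤ q - 1
        set d := q - j with hddef
        have hd2 : 2 ≤ d := by omega
        have hdq : d < q := by omega
        set p := d.minFac with hpdef
        have hp : p.Prime := Nat.minFac_prime (by omega)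
        have hpd : p ∣ d := Nat.minFac_dvd d
        have hpq : p < q := lt_of_le_of_lt (Nat.minFac_le (by omega)) hdq
        have hpP : p ∣ P := dvd_primorial_of_lt hp hpq
        have hpC : p ∣ C := dvd_trans hpP hCP
        rw [show C - q + j = C - d by omega]
        exact key (C - d) p hp.one_lt (Nat.dvd_sub hpC hpd) (dvd_trans hpP hPM)
      · -- j > q : y = C + d with d = j - q, 2 ≤ d ≤ q - 1
        set d := j - q with hddef
        have hd2 : 2 ≤ d := by omega
        have hdq : d < q := by omega
        set p := d.minFac with hpdef
        have hp : p.Prime := Nat.minFac_prime (by omega)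
        have hpd : p ∣ d := Nat.minFac_dvd d
        have hpq : p < q := lt_of_le_of_lt (Nat.minFac_le (by omega)) hdq
        have hpP : p ∣ P := dvd_primorial_of_lt hp hpq
        have hpC : p ∣ C := dvd_trans hpP hCP
        rw [show C - q + j = C + d by omega]
        exact key (C + d) p hp.one_lt (Nat.dvd_add hpC hpd) (dvd_trans hpP hPM)

end PrimorialDifferences
end

section
/- Let k ≥ 1, let π_1, …, π_k be pairwise distinct primes, and let Π = ∏_{i=1}^k π_i. Then there exist integers x < y with gcd(x, Π) = gcd(y, Π) = 1 and gcd(z, Π) > 1 for all integers z with x < z < y, if and only if there exist residues a_i ∈ {1, …, π_i − 1}, i = 1, …, k, such that {a_i mod π_i}_{i=1}^k is a restricted covering of ⟨1⟩_{y−x−1}: every j ∈ {1, …, y−x−1} satisfies j ≡ a_i (mod π_i) for some i, and y − x ≢ a_i (mod π_i) for all i. -/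
namespace PrimorialDifferences

/-- `Covers π r a m` : the residue classes `r i mod π i`, `i = 1, …, k`, cover the sequence
`⟨a⟩_m = (a, a+1, …, a+m−1)` of `m` consecutive integers starting at `a`. -/
def Covers {k : ℕ} (π : Fin k → ℕ) (r : Fin k → ℕ) (a : ℤ) (m : ℕ) : Prop :=
  ∀ j : ℕ, j < m → ∃ i : Fin k, a + (j : ℤ) ≡ (r i : ℤ) [ZMOD (π i : ℤ)]

/-- `RestrictedCovers π r a m` : the residue classes `r i mod π i` cover `⟨a⟩_m` and,
in addition, none of them covers `a - 1` or `a + m`. -/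
def RestrictedCovers {k : ℕ} (π : Fin k → ℕ) (r : Fin k → ℕ) (a : ℤ) (m : ℕ) : Prop :=
  Covers π r a m ∧
    (∀ i : Fin k, ¬ (a - 1 ≡ (r i : ℤ) [ZMOD (π i : ℤ)])) ∧
    (∀ i : Fin k, ¬ (a + (m : ℤ) ≡ (r i : ℤ) [ZMOD (π i : ℤ)]))

/-- Coprimality to a product of primes is equivalent to not being divisible by any of them. -/
lemma gcd_prod_eq_one_iff {k : ℕ} (π : Fin k → ℕ) (hπ : ∀ i, Nat.Prime (π i)) (x : ℤ) :
    Int.gcd x ((∏ i, π i : ℕ) : ℤ) = 1 ↔ ∀ i, ¬ ((π i : ℤ) ∣ x) := by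
  rw [← Int.isCoprime_iff_gcd_eq_one,
    show (((∏ i, π i : ℕ)) : ℤ) = ∏ i, (π i : ℤ) by push_cast; rfl,
    IsCoprime.prod_right_iff]
  constructor
  · intro h i
    exact ((Nat.prime_iff_prime_int.mp (hπ i)).coprime_iff_not_dvd).mp
      (h i (Finset.mem_univ i)).symm
  · intro h i _
    exact (((Nat.prime_iff_prime_int.mp (hπ i)).coprime_iff_not_dvd).mpr (h i)).symm

lemma one_lt_gcd_of_dvd {k : ℕ} (π : Fin k → ℕ) (hπ : ∀ i, Nat.Prime (π i)) (z : ℤ)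
    (i : Fin k) (hdvd : (π i : ℤ) ∣ z) : 1 < Int.gcd z ((∏ j, π j : ℕ) : ℤ) := by
  have h2 : (π i : ℤ) ∣ ((∏ j, π j : ℕ) : ℤ) :=
    Int.natCast_dvd_natCast.mpr (Finset.dvd_prod_of_mem π (Finset.mem_univ i))
  have hd : (π i : ℤ) ∣ (Int.gcd z ((∏ j, π j : ℕ) : ℤ) : ℤ) := Int.dvd_coe_gcd hdvd h2
  have hd' : π i ∣ Int.gcd z ((∏ j, π j : ℕ) : ℤ) := Int.natCast_dvd_natCast.mp hd
  have hpos : 0 < Int.gcd z ((∏ j, π j : ℕ) : ℤ) := by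
    apply Int.gcd_pos_of_ne_zero_right
    have h0 : (∏ j, π j : ℕ) ≠ 0 := Finset.prod_ne_zero_iff.mpr fun j _ => (hπ j).ne_zero
    exact_mod_cast h0
  calc 1 < π i := (hπ i).one_lt
    _ ≤ _ := Nat.le_of_dvd hpos hd'

theorem consecutive_coprimes_iff_restricted_covering (k : ℕ) (hk : 1 ≤ k)
    (π : Fin k → ℕ) (hπ : ∀ i, Nat.Prime (π i))
    (hdist : ∀ i j : Fin k, i ≠ j → π i ≠ π j) (m : ℕ) (hm : 1 ≤ m) :
    (∃ x y : ℤ, x < y ∧ y - x = (m : ℤ) ∧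
        Int.gcd x ((∏ i, π i : ℕ) : ℤ) = 1 ∧ Int.gcd y ((∏ i, π i : ℕ) : ℤ) = 1 ∧
        ∀ z : ℤ, x < z → z < y → 1 < Int.gcd z ((∏ i, π i : ℕ) : ℤ))
    ↔ (∃ r : Fin k → ℕ, (∀ i, 1 ≤ r i ∧ r i < π i) ∧
        RestrictedCovers π r 1 (m - 1)) := by
  have hmcast : ((m - 1 : ℕ) : ℤ) = (m : ℤ) - 1 := by
    have := Nat.cast_sub (R := ℤ) hm; simpa using this
  have hppos : ∀ i, (0 : ℤ) < (π i : ℤ) := fun i => by exact_mod_cast (hπ i).pos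
  constructor
  · rintro ⟨x, y, hxy, hsub, hgx, hgy, hz⟩
    have hy : y = x + m := by linarith
    have hxnd : ∀ i, ¬ ((π i : ℤ) ∣ x) := (gcd_prod_eq_one_iff π hπ x).mp hgx
    have hynd : ∀ i, ¬ ((π i : ℤ) ∣ y) := (gcd_prod_eq_one_iff π hπ y).mp hgy
    set r : Fin k → ℕ := fun i => ((-x) % (π i : ℤ)).toNat with hr
    have hrnn : ∀ i, 0 ≤ (-x) % (π i : ℤ) := fun i => Int.emod_nonneg _ (ne_of_gt (hppos i))
    have hrcast : ∀ i, (r i : ℤ) = (-x) % (π i : ℤ) := fun i => Int.toNat_of_nonneg (hrnn i)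
    have hrlt : ∀ i, (r i : ℤ) < (π i : ℤ) := fun i => by
      rw [hrcast]; exact Int.emod_lt_of_pos _ (hppos i)
    have hcong : ∀ i, (-x) ≡ (r i : ℤ) [ZMOD (π i : ℤ)] := fun i => by
      rw [hrcast]
      exact (Int.emod_emod_of_dvd _ dvd_rfl).symm
    have hrpos : ∀ i, 0 < r i := by
      intro i
      rcases Nat.eq_zero_or_pos (r i) with h0 | h1
      · exfalso
        have hz0 : (-x) % (π i : ℤ) = 0 := by rw [← hrcast, h0]; simp
        have hdvd : (π i : ℤ) ∣ (-x) := Int.dvd_of_emod_eq_zero hz0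
        exact hxnd i ((dvd_neg).mp hdvd)
      · exact h1
    -- key equivalence
    have key : ∀ (i : Fin k) (t : ℤ), ((π i : ℤ) ∣ (x + t)) ↔ (t ≡ (r i : ℤ) [ZMOD (π i : ℤ)]) := by
      intro i t
      constructor
      · intro hd
        have h1 : t ≡ -x [ZMOD (π i : ℤ)] := by
          rw [Int.modEq_iff_dvd]
          simpa [sub_eq_add_neg, add_comm] using (dvd_neg.mpr hd)
        exact h1.trans (hcong i)
      · intro h1
        have h2 : t ≡ -x [ZMOD (π i : ℤ)] := h1.trans (hcong i).symm
        have := Int.ModEq.dvd h2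
        -- (π i) ∣ -x - t
        have h3 : (π i : ℤ) ∣ (-x - t) := this
        have h4 : (π i : ℤ) ∣ -(-x - t) := dvd_neg.mpr h3
        simpa [neg_sub, sub_neg_eq_add, add_comm] using h4
    refine ⟨r, fun i => ⟨hrpos i, by exact_mod_cast hrlt i⟩, ?_, ?_, ?_⟩
    · -- Covers
      intro j hj
      have hjm : (1 : ℤ) + (j : ℤ) < (m : ℤ) := by
        have h1 : (j : ℤ) < ((m - 1 : ℕ) : ℤ) := by exact_mod_cast hj
        rw [hmcast] at h1; linarith
      have hgz : 1 < Int.gcd (x + (1 + (j : ℤ))) ((∏ i, π i : ℕ) : ℤ) := by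
        apply hz
        · linarith [Int.natCast_nonneg j]
        · rw [hy]; linarith
      by_contra hcon
      push_neg at hcon
      have : Int.gcd (x + (1 + (j : ℤ))) ((∏ i, π i : ℕ) : ℤ) = 1 := by
        rw [gcd_prod_eq_one_iff π hπ]
        intro i hdvd
        exact hcon i ((key i (1 + (j : ℤ))).mp hdvd)
      omega
    · -- a - 1 = 0 not covered
      intro i hcov
      have h0 : (1 : ℤ) - 1 = 0 := by ring
      rw [h0] at hcov
      have : (π i : ℤ) ∣ (r i : ℤ) := by
        have := Int.ModEq.dvd hcov
        simpa using this
      have hnat : π i ∣ r i := Int.natCast_dvd_natCast.mp this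
      have := Nat.le_of_dvd (hrpos i) hnat
      have hlt : r i < π i := by exact_mod_cast hrlt i
      omega
    · -- a + (m-1) = m not covered
      intro i hcov
      have hcov' : (m : ℤ) ≡ (r i : ℤ) [ZMOD (π i : ℤ)] := by
        rw [hmcast] at hcov
        convert hcov using 2
        ring
      have : (π i : ℤ) ∣ (x + (m : ℤ)) := (key i (m : ℤ)).mpr hcov'
      rw [← hy] at this
      exact hynd i this
  · rintro ⟨r, hr, hcov, h0, hM⟩
    -- CRT
    have hs : ∀ i ∈ (Finset.univ : Finset (Fin k)), π i ≠ 0 := fun i _ => (hπ i).ne_zero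
    have pp : Set.Pairwise (Finset.univ : Finset (Fin k)) (Function.onFun Nat.Coprime π) := by
      intro i _ j _ hij
      exact (Nat.coprime_primes (hπ i) (hπ j)).mpr (hdist i j hij)
    obtain ⟨x, hx⟩ := Nat.chineseRemainderOfFinset (fun i => π i - r i) π Finset.univ hs pp
    -- π i ∣ x + r i
    have hdvd : ∀ i, (π i : ℤ) ∣ ((x : ℤ) + (r i : ℤ)) := by
      intro i
      have h1 : x + r i ≡ (π i - r i) + r i [MOD π i] :=
        Nat.ModEq.add_right _ (hx i (Finset.mem_univ i))
      rw [Nat.sub_add_cancel (le_of_lt (hr i).2)] at h1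
      have h2 : x + r i ≡ 0 [MOD π i] := h1.trans (Nat.modEq_zero_iff_dvd.mpr dvd_rfl)
      have h3 : π i ∣ x + r i := Nat.modEq_zero_iff_dvd.mp h2
      exact_mod_cast Int.natCast_dvd_natCast.mpr h3
    refine ⟨(x : ℤ), (x : ℤ) + (m : ℤ), by linarith [show (1:ℤ) ≤ (m:ℤ) by exact_mod_cast hm],
      by ring, ?_, ?_, ?_⟩
    · rw [gcd_prod_eq_one_iff π hπ]
      intro i hdx
      have : (π i : ℤ) ∣ (r i : ℤ) := (dvd_add_right hdx).mp (hdvd i)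
      have hnat : π i ∣ r i := Int.natCast_dvd_natCast.mp this
      have := Nat.le_of_dvd (hr i).1 hnat
      have := (hr i).2
      omega
    · rw [gcd_prod_eq_one_iff π hπ]
      intro i hdy
      apply hM i
      have h1 : (π i : ℤ) ∣ ((m : ℤ) - (r i : ℤ)) := by
        have := dvd_sub hdy (hdvd i)
        simpa [add_sub_add_left_eq_sub] using this
      have h2 : (m : ℤ) ≡ (r i : ℤ) [ZMOD (π i : ℤ)] := by
        rw [Int.modEq_iff_dvd]
        have h1' := dvd_neg.mpr h1
        rwa [neg_sub] at h1'
      rw [hmcast]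
      convert h2 using 2
      ring
    · intro z hz1 hz2
      have h1le : (1 : ℤ) ≤ z - x := by linarith
      have hlt : z - x - 1 < ((m - 1 : ℕ) : ℤ) := by rw [hmcast]; linarith
      set j : ℕ := (z - (x : ℤ) - 1).toNat with hj
      have hjcast : (j : ℤ) = z - x - 1 := Int.toNat_of_nonneg (by linarith)
      have hjlt : j < m - 1 := by
        have : (j : ℤ) < ((m - 1 : ℕ) : ℤ) := by rw [hjcast]; exact hlt
        exact_mod_cast this
      obtain ⟨i, hi⟩ := hcov j hjlt
      -- 1 + j ≡ r i, i.e. z - x ≡ r i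
      have h2 : z - (x : ℤ) ≡ (r i : ℤ) [ZMOD (π i : ℤ)] := by
        have : (1 : ℤ) + (j : ℤ) = z - x := by rw [hjcast]; ring
        rwa [this] at hi
      have h3 : (π i : ℤ) ∣ ((r i : ℤ) - (z - x)) := Int.ModEq.dvd h2
      have h4 : (π i : ℤ) ∣ z := by
        have h5 := dvd_sub (hdvd i) h3
        rwa [show ((x : ℤ) + (r i : ℤ)) - ((r i : ℤ) - (z - (x : ℤ))) = z from by ring] at h5
      exact one_lt_gcd_of_dvd π hπ z i h4

end PrimorialDifferences
end

section
/- For every k ≥ 1 there exists a restricted covering {a_i mod p_i}_{i=1}^k of ⟨1⟩_{2k−1} = (1, 2, …, 2k−1) using the first k primes; consequently, 2k ∈ D(k), i.e., 2k occurs as a difference between consecutive positive integers coprime to p_k#. -/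
set_option maxRecDepth 400000


namespace PrimorialDifferences

/-! ### Auxiliary development -/


local notation "pp" => Nat.nth Nat.Prime

/-- Nat-level version of a restricted covering of `(1, …, 2k-1)` by the first `k` primes. -/
def NatRC (k : ℕ) (r : Fin k → ℕ) : Prop :=
  (∀ i, r i < pp i) ∧
  (∀ t, 0 < t → t < 2*k → ∃ i : Fin k, t ≡ r i [MOD pp i]) ∧
  (∀ i : Fin k, ¬ ((0:ℕ) ≡ r i [MOD pp i])) ∧
  (∀ i : Fin k, ¬ (2*k ≡ r i [MOD pp i]))

lemma natRC_to_restricted {k : ℕ} (hk : 1 ≤ k) {r : Fin k → ℕ} (h : NatRC k r) :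
    RestrictedCovers (fun i : Fin k => pp i) r 1 (2 * k - 1) := by
  obtain ⟨hlt, hcov, h0, h2k⟩ := h
  refine ⟨?_, ?_, ?_⟩
  · intro j hj
    obtain ⟨i, hi⟩ := hcov (1 + j) (by omega) (by omega)
    refine ⟨i, ?_⟩
    have : ((1 + j : ℕ) : ℤ) ≡ ((r i : ℕ) : ℤ) [ZMOD ((pp i : ℕ) : ℤ)] :=
      Int.natCast_modEq_iff.mpr hi
    simpa [Int.natCast_add] using this
  · intro i hi
    apply h0 i
    have : ((0:ℕ) : ℤ) ≡ ((r i : ℕ) : ℤ) [ZMOD ((pp i : ℕ) : ℤ)] := by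
      simpa using hi
    exact Int.natCast_modEq_iff.mp this
  · intro i hi
    apply h2k i
    have he : (1 : ℤ) + ((2 * k - 1 : ℕ) : ℤ) = ((2 * k : ℕ) : ℤ) := by
      have : (1:ℕ) ≤ 2 * k := by omega
      push_cast [Nat.cast_sub this]
      ring
    rw [he] at hi
    exact Int.natCast_modEq_iff.mp hi

lemma prime_pp (i : ℕ) : (pp i).Prime := Nat.prime_nth_prime i

lemma pp_pos (i : ℕ) : 0 < pp i := (prime_pp i).pos

lemma natRC_to_memD {k : ℕ} (hk : 1 ≤ k) {r : Fin k → ℕ} (h : NatRC k r) :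
    memD k (2 * k) := by
  classical
  obtain ⟨hlt, hcov, h0, h2k⟩ := h
  -- CRT: find x with x + r i ≡ 0 mod p i for all i
  set s : Fin k → ℕ := fun i => pp i with hs
  set a : Fin k → ℕ := fun i => (pp i - r i) % pp i with ha
  have co : (List.finRange k).Pairwise (Function.onFun Nat.Coprime s) := by
    refine (List.pairwise_lt_finRange k).imp ?_
    intro i j hij
    have : pp (i:ℕ) ≠ pp (j:ℕ) := by
      intro hpp
      have := Nat.nth_injective Nat.infinite_setOf_prime hpp
      omega
    exact (Nat.coprime_primes (prime_pp _) (prime_pp _)).mpr this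
  obtain ⟨x₀, hx₀⟩ := Nat.chineseRemainderOfList a s (List.finRange k) co
  have hx₀' : ∀ i : Fin k, x₀ ≡ a i [MOD pp i] := fun i => hx₀ i (List.mem_finRange i)
  have hPpos : 0 < primorial k := Finset.prod_pos fun i _ => pp_pos i
  set x : ℕ := x₀ + primorial k with hx
  have hdvdP : ∀ i : Fin k, pp i ∣ primorial k := by
    intro i
    exact Finset.dvd_prod_of_mem _ (Finset.mem_range.mpr i.isLt)
  have hxmod : ∀ i : Fin k, x ≡ a i [MOD pp i] := by
    intro i
    have : (primorial k) ≡ 0 [MOD pp i] := (Nat.modEq_zero_iff_dvd).mpr (hdvdP i)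
    calc x₀ + primorial k ≡ x₀ + 0 [MOD pp i] := (Nat.ModEq.refl x₀).add this
      _ = x₀ := by ring
      _ ≡ a i [MOD pp i] := hx₀' i
  have key : ∀ i : Fin k, x + r i ≡ 0 [MOD pp i] := by
    intro i
    have h1 : x + r i ≡ (pp i - r i) + r i [MOD pp i] :=
      (hxmod i).add_right _ |>.trans ((Nat.mod_modEq _ _).add_right _)
    have h2 : pp i - r i + r i = pp i := Nat.sub_add_cancel (le_of_lt (hlt i))
    rw [h2] at h1
    exact h1.trans ((Nat.modEq_zero_iff_dvd).mpr dvd_rfl)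
  -- now verify memD
  refine ⟨x, by positivity, ?_, ?_, ?_⟩
  · -- gcd x P = 1
    apply Nat.Coprime.prod_right
    intro i hi
    set i' : Fin k := ⟨i, Finset.mem_range.mp hi⟩
    rw [Nat.coprime_comm]
    apply (Nat.Prime.coprime_iff_not_dvd (prime_pp i)).mpr
    intro hdvd
    apply h0 i'
    have hx0 : x ≡ 0 [MOD pp i'] := (Nat.modEq_zero_iff_dvd).mpr hdvd
    have : x + r i' ≡ 0 + r i' [MOD pp i'] := hx0.add_right _
    have h2 := (this.symm.trans (key i')).symm
    simpa using h2
  · -- gcd (x + 2k) P = 1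
    apply Nat.Coprime.prod_right
    intro i hi
    set i' : Fin k := ⟨i, Finset.mem_range.mp hi⟩
    rw [Nat.coprime_comm]
    apply (Nat.Prime.coprime_iff_not_dvd (prime_pp i)).mpr
    intro hdvd
    apply h2k i'
    have hx0 : x + 2 * k ≡ 0 [MOD pp i'] := (Nat.modEq_zero_iff_dvd).mpr hdvd
    have : x + 2 * k ≡ x + r i' [MOD pp i'] := hx0.trans (key i').symm
    exact Nat.ModEq.add_left_cancel' x this
  · intro j hj0 hj2k
    obtain ⟨i, hi⟩ := hcov j hj0 hj2k
    have : x + j ≡ 0 [MOD pp i] := ((Nat.ModEq.refl x).add hi).trans (key i)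
    have hdvd : pp i ∣ x + j := (Nat.modEq_zero_iff_dvd).mp this
    have hgcd : pp i ∣ Nat.gcd (x + j) (primorial k) := Nat.dvd_gcd hdvd (hdvdP i)
    have : 2 ≤ Nat.gcd (x + j) (primorial k) :=
      le_trans (prime_pp i).two_le (Nat.le_of_dvd (Nat.gcd_pos_of_pos_right _ hPpos) hgcd)
    omega


section PrimeTable
attribute [local instance 2000] Nat.decidablePrime
def pl : List ℕ := [2, 3, 5, 7, 11, 13, 17, 19, 23, 29, 31, 37, 41, 43, 47, 53, 59, 61, 67, 71, 73, 79, 83, 89, 97, 101, 103, 107, 109, 113, 127, 131, 137, 139, 149, 151, 157, 163, 167, 173, 179, 181, 191, 193, 197, 199, 211, 223, 227, 229, 233, 239, 241, 251, 257, 263, 269, 271, 277, 281, 283, 293, 307, 311, 313, 317, 331, 337, 347, 349, 353, 359]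

private lemma count_stable (p d : ℕ) (h : ∀ m < p + 1 + d, p < m → ¬ Nat.Prime m) :
    Nat.count Nat.Prime (p + 1 + d) = Nat.count Nat.Prime (p + 1) := by
  induction d with
  | zero => rfl
  | succ n ih =>
      rw [show p + 1 + (n+1) = (p + 1 + n) + 1 by ring, Nat.count_succ,
        ih (fun m hm hm2 => h m (by omega) hm2), if_neg (h _ (by omega) (by omega))]
      ring

private lemma count_step {p i q : ℕ} (hcount : Nat.count Nat.Prime p = i) (hp : Nat.Prime p)
    (hlt : p < q) (hnone : ∀ m < q, p < m → ¬ Nat.Prime m) :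
    Nat.count Nat.Prime q = i + 1 := by
  have h1 : q = p + 1 + (q - p - 1) := by omega
  rw [h1, count_stable _ _ (by intro m hm hm2; exact hnone m (by omega) hm2),
    Nat.count_succ, hcount, if_pos hp]

lemma pl_nth : ∀ i < 72, Nat.nth Nat.Prime i = pl.getD i 0 := by
  have c0 : Nat.count Nat.Prime 2 = 0 := by decide
  have c1 : Nat.count Nat.Prime 3 = 1 := count_step c0 (by norm_num) (by norm_num) (by decide)
  have c2 : Nat.count Nat.Prime 5 = 2 := count_step c1 (by norm_num) (by norm_num) (by decide)
  have c3 : Nat.count Nat.Prime 7 = 3 := count_step c2 (by norm_num) (by norm_num) (by decide)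
  have c4 : Nat.count Nat.Prime 11 = 4 := count_step c3 (by norm_num) (by norm_num) (by decide)
  have c5 : Nat.count Nat.Prime 13 = 5 := count_step c4 (by norm_num) (by norm_num) (by decide)
  have c6 : Nat.count Nat.Prime 17 = 6 := count_step c5 (by norm_num) (by norm_num) (by decide)
  have c7 : Nat.count Nat.Prime 19 = 7 := count_step c6 (by norm_num) (by norm_num) (by decide)
  have c8 : Nat.count Nat.Prime 23 = 8 := count_step c7 (by norm_num) (by norm_num) (by decide)
  have c9 : Nat.count Nat.Prime 29 = 9 := count_step c8 (by norm_num) (by norm_num) (by decide)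
  have c10 : Nat.count Nat.Prime 31 = 10 := count_step c9 (by norm_num) (by norm_num) (by decide)
  have c11 : Nat.count Nat.Prime 37 = 11 := count_step c10 (by norm_num) (by norm_num) (by decide)
  have c12 : Nat.count Nat.Prime 41 = 12 := count_step c11 (by norm_num) (by norm_num) (by decide)
  have c13 : Nat.count Nat.Prime 43 = 13 := count_step c12 (by norm_num) (by norm_num) (by decide)
  have c14 : Nat.count Nat.Prime 47 = 14 := count_step c13 (by norm_num) (by norm_num) (by decide)
  have c15 : Nat.count Nat.Prime 53 = 15 := count_step c14 (by norm_num) (by norm_num) (by decide)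
  have c16 : Nat.count Nat.Prime 59 = 16 := count_step c15 (by norm_num) (by norm_num) (by decide)
  have c17 : Nat.count Nat.Prime 61 = 17 := count_step c16 (by norm_num) (by norm_num) (by decide)
  have c18 : Nat.count Nat.Prime 67 = 18 := count_step c17 (by norm_num) (by norm_num) (by decide)
  have c19 : Nat.count Nat.Prime 71 = 19 := count_step c18 (by norm_num) (by norm_num) (by decide)
  have c20 : Nat.count Nat.Prime 73 = 20 := count_step c19 (by norm_num) (by norm_num) (by decide)
  have c21 : Nat.count Nat.Prime 79 = 21 := count_step c20 (by norm_num) (by norm_num) (by decide)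
  have c22 : Nat.count Nat.Prime 83 = 22 := count_step c21 (by norm_num) (by norm_num) (by decide)
  have c23 : Nat.count Nat.Prime 89 = 23 := count_step c22 (by norm_num) (by norm_num) (by decide)
  have c24 : Nat.count Nat.Prime 97 = 24 := count_step c23 (by norm_num) (by norm_num) (by decide)
  have c25 : Nat.count Nat.Prime 101 = 25 := count_step c24 (by norm_num) (by norm_num) (by decide)
  have c26 : Nat.count Nat.Prime 103 = 26 := count_step c25 (by norm_num) (by norm_num) (by decide)
  have c27 : Nat.count Nat.Prime 107 = 27 := count_step c26 (by norm_num) (by norm_num) (by decide)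
  have c28 : Nat.count Nat.Prime 109 = 28 := count_step c27 (by norm_num) (by norm_num) (by decide)
  have c29 : Nat.count Nat.Prime 113 = 29 := count_step c28 (by norm_num) (by norm_num) (by decide)
  have c30 : Nat.count Nat.Prime 127 = 30 := count_step c29 (by norm_num) (by norm_num) (by decide)
  have c31 : Nat.count Nat.Prime 131 = 31 := count_step c30 (by norm_num) (by norm_num) (by decide)
  have c32 : Nat.count Nat.Prime 137 = 32 := count_step c31 (by norm_num) (by norm_num) (by decide)
  have c33 : Nat.count Nat.Prime 139 = 33 := count_step c32 (by norm_num) (by norm_num) (by decide)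
  have c34 : Nat.count Nat.Prime 149 = 34 := count_step c33 (by norm_num) (by norm_num) (by decide)
  have c35 : Nat.count Nat.Prime 151 = 35 := count_step c34 (by norm_num) (by norm_num) (by decide)
  have c36 : Nat.count Nat.Prime 157 = 36 := count_step c35 (by norm_num) (by norm_num) (by decide)
  have c37 : Nat.count Nat.Prime 163 = 37 := count_step c36 (by norm_num) (by norm_num) (by decide)
  have c38 : Nat.count Nat.Prime 167 = 38 := count_step c37 (by norm_num) (by norm_num) (by decide)
  have c39 : Nat.count Nat.Prime 173 = 39 := count_step c38 (by norm_num) (by norm_num) (by decide)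
  have c40 : Nat.count Nat.Prime 179 = 40 := count_step c39 (by norm_num) (by norm_num) (by decide)
  have c41 : Nat.count Nat.Prime 181 = 41 := count_step c40 (by norm_num) (by norm_num) (by decide)
  have c42 : Nat.count Nat.Prime 191 = 42 := count_step c41 (by norm_num) (by norm_num) (by decide)
  have c43 : Nat.count Nat.Prime 193 = 43 := count_step c42 (by norm_num) (by norm_num) (by decide)
  have c44 : Nat.count Nat.Prime 197 = 44 := count_step c43 (by norm_num) (by norm_num) (by decide)
  have c45 : Nat.count Nat.Prime 199 = 45 := count_step c44 (by norm_num) (by norm_num) (by decide)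
  have c46 : Nat.count Nat.Prime 211 = 46 := count_step c45 (by norm_num) (by norm_num) (by decide)
  have c47 : Nat.count Nat.Prime 223 = 47 := count_step c46 (by norm_num) (by norm_num) (by decide)
  have c48 : Nat.count Nat.Prime 227 = 48 := count_step c47 (by norm_num) (by norm_num) (by decide)
  have c49 : Nat.count Nat.Prime 229 = 49 := count_step c48 (by norm_num) (by norm_num) (by decide)
  have c50 : Nat.count Nat.Prime 233 = 50 := count_step c49 (by norm_num) (by norm_num) (by decide)
  have c51 : Nat.count Nat.Prime 239 = 51 := count_step c50 (by norm_num) (by norm_num) (by decide)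
  have c52 : Nat.count Nat.Prime 241 = 52 := count_step c51 (by norm_num) (by norm_num) (by decide)
  have c53 : Nat.count Nat.Prime 251 = 53 := count_step c52 (by norm_num) (by norm_num) (by decide)
  have c54 : Nat.count Nat.Prime 257 = 54 := count_step c53 (by norm_num) (by norm_num) (by decide)
  have c55 : Nat.count Nat.Prime 263 = 55 := count_step c54 (by norm_num) (by norm_num) (by decide)
  have c56 : Nat.count Nat.Prime 269 = 56 := count_step c55 (by norm_num) (by norm_num) (by decide)
  have c57 : Nat.count Nat.Prime 271 = 57 := count_step c56 (by norm_num) (by norm_num) (by decide)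
  have c58 : Nat.count Nat.Prime 277 = 58 := count_step c57 (by norm_num) (by norm_num) (by decide)
  have c59 : Nat.count Nat.Prime 281 = 59 := count_step c58 (by norm_num) (by norm_num) (by decide)
  have c60 : Nat.count Nat.Prime 283 = 60 := count_step c59 (by norm_num) (by norm_num) (by decide)
  have c61 : Nat.count Nat.Prime 293 = 61 := count_step c60 (by norm_num) (by norm_num) (by decide)
  have c62 : Nat.count Nat.Prime 307 = 62 := count_step c61 (by norm_num) (by norm_num) (by decide)
  have c63 : Nat.count Nat.Prime 311 = 63 := count_step c62 (by norm_num) (by norm_num) (by decide)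
  have c64 : Nat.count Nat.Prime 313 = 64 := count_step c63 (by norm_num) (by norm_num) (by decide)
  have c65 : Nat.count Nat.Prime 317 = 65 := count_step c64 (by norm_num) (by norm_num) (by decide)
  have c66 : Nat.count Nat.Prime 331 = 66 := count_step c65 (by norm_num) (by norm_num) (by decide)
  have c67 : Nat.count Nat.Prime 337 = 67 := count_step c66 (by norm_num) (by norm_num) (by decide)
  have c68 : Nat.count Nat.Prime 347 = 68 := count_step c67 (by norm_num) (by norm_num) (by decide)
  have c69 : Nat.count Nat.Prime 349 = 69 := count_step c68 (by norm_num) (by norm_num) (by decide)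
  have c70 : Nat.count Nat.Prime 353 = 70 := count_step c69 (by norm_num) (by norm_num) (by decide)
  have c71 : Nat.count Nat.Prime 359 = 71 := count_step c70 (by norm_num) (by norm_num) (by decide)
  have h0 : Nat.nth Nat.Prime 0 = 2 := by have := Nat.nth_count (p := Nat.Prime) (show Nat.Prime 2 by norm_num); rwa [c0] at this
  have h1 : Nat.nth Nat.Prime 1 = 3 := by have := Nat.nth_count (p := Nat.Prime) (show Nat.Prime 3 by norm_num); rwa [c1] at this
  have h2 : Nat.nth Nat.Prime 2 = 5 := by have := Nat.nth_count (p := Nat.Prime) (show Nat.Prime 5 by norm_num); rwa [c2] at this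
  have h3 : Nat.nth Nat.Prime 3 = 7 := by have := Nat.nth_count (p := Nat.Prime) (show Nat.Prime 7 by norm_num); rwa [c3] at this
  have h4 : Nat.nth Nat.Prime 4 = 11 := by have := Nat.nth_count (p := Nat.Prime) (show Nat.Prime 11 by norm_num); rwa [c4] at this
  have h5 : Nat.nth Nat.Prime 5 = 13 := by have := Nat.nth_count (p := Nat.Prime) (show Nat.Prime 13 by norm_num); rwa [c5] at this
  have h6 : Nat.nth Nat.Prime 6 = 17 := by have := Nat.nth_count (p := Nat.Prime) (show Nat.Prime 17 by norm_num); rwa [c6] at this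
  have h7 : Nat.nth Nat.Prime 7 = 19 := by have := Nat.nth_count (p := Nat.Prime) (show Nat.Prime 19 by norm_num); rwa [c7] at this
  have h8 : Nat.nth Nat.Prime 8 = 23 := by have := Nat.nth_count (p := Nat.Prime) (show Nat.Prime 23 by norm_num); rwa [c8] at this
  have h9 : Nat.nth Nat.Prime 9 = 29 := by have := Nat.nth_count (p := Nat.Prime) (show Nat.Prime 29 by norm_num); rwa [c9] at this
  have h10 : Nat.nth Nat.Prime 10 = 31 := by have := Nat.nth_count (p := Nat.Prime) (show Nat.Prime 31 by norm_num); rwa [c10] at this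
  have h11 : Nat.nth Nat.Prime 11 = 37 := by have := Nat.nth_count (p := Nat.Prime) (show Nat.Prime 37 by norm_num); rwa [c11] at this
  have h12 : Nat.nth Nat.Prime 12 = 41 := by have := Nat.nth_count (p := Nat.Prime) (show Nat.Prime 41 by norm_num); rwa [c12] at this
  have h13 : Nat.nth Nat.Prime 13 = 43 := by have := Nat.nth_count (p := Nat.Prime) (show Nat.Prime 43 by norm_num); rwa [c13] at this
  have h14 : Nat.nth Nat.Prime 14 = 47 := by have := Nat.nth_count (p := Nat.Prime) (show Nat.Prime 47 by norm_num); rwa [c14] at this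
  have h15 : Nat.nth Nat.Prime 15 = 53 := by have := Nat.nth_count (p := Nat.Prime) (show Nat.Prime 53 by norm_num); rwa [c15] at this
  have h16 : Nat.nth Nat.Prime 16 = 59 := by have := Nat.nth_count (p := Nat.Prime) (show Nat.Prime 59 by norm_num); rwa [c16] at this
  have h17 : Nat.nth Nat.Prime 17 = 61 := by have := Nat.nth_count (p := Nat.Prime) (show Nat.Prime 61 by norm_num); rwa [c17] at this
  have h18 : Nat.nth Nat.Prime 18 = 67 := by have := Nat.nth_count (p := Nat.Prime) (show Nat.Prime 67 by norm_num); rwa [c18] at this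
  have h19 : Nat.nth Nat.Prime 19 = 71 := by have := Nat.nth_count (p := Nat.Prime) (show Nat.Prime 71 by norm_num); rwa [c19] at this
  have h20 : Nat.nth Nat.Prime 20 = 73 := by have := Nat.nth_count (p := Nat.Prime) (show Nat.Prime 73 by norm_num); rwa [c20] at this
  have h21 : Nat.nth Nat.Prime 21 = 79 := by have := Nat.nth_count (p := Nat.Prime) (show Nat.Prime 79 by norm_num); rwa [c21] at this
  have h22 : Nat.nth Nat.Prime 22 = 83 := by have := Nat.nth_count (p := Nat.Prime) (show Nat.Prime 83 by norm_num); rwa [c22] at this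
  have h23 : Nat.nth Nat.Prime 23 = 89 := by have := Nat.nth_count (p := Nat.Prime) (show Nat.Prime 89 by norm_num); rwa [c23] at this
  have h24 : Nat.nth Nat.Prime 24 = 97 := by have := Nat.nth_count (p := Nat.Prime) (show Nat.Prime 97 by norm_num); rwa [c24] at this
  have h25 : Nat.nth Nat.Prime 25 = 101 := by have := Nat.nth_count (p := Nat.Prime) (show Nat.Prime 101 by norm_num); rwa [c25] at this
  have h26 : Nat.nth Nat.Prime 26 = 103 := by have := Nat.nth_count (p := Nat.Prime) (show Nat.Prime 103 by norm_num); rwa [c26] at this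
  have h27 : Nat.nth Nat.Prime 27 = 107 := by have := Nat.nth_count (p := Nat.Prime) (show Nat.Prime 107 by norm_num); rwa [c27] at this
  have h28 : Nat.nth Nat.Prime 28 = 109 := by have := Nat.nth_count (p := Nat.Prime) (show Nat.Prime 109 by norm_num); rwa [c28] at this
  have h29 : Nat.nth Nat.Prime 29 = 113 := by have := Nat.nth_count (p := Nat.Prime) (show Nat.Prime 113 by norm_num); rwa [c29] at this
  have h30 : Nat.nth Nat.Prime 30 = 127 := by have := Nat.nth_count (p := Nat.Prime) (show Nat.Prime 127 by norm_num); rwa [c30] at this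
  have h31 : Nat.nth Nat.Prime 31 = 131 := by have := Nat.nth_count (p := Nat.Prime) (show Nat.Prime 131 by norm_num); rwa [c31] at this
  have h32 : Nat.nth Nat.Prime 32 = 137 := by have := Nat.nth_count (p := Nat.Prime) (show Nat.Prime 137 by norm_num); rwa [c32] at this
  have h33 : Nat.nth Nat.Prime 33 = 139 := by have := Nat.nth_count (p := Nat.Prime) (show Nat.Prime 139 by norm_num); rwa [c33] at this
  have h34 : Nat.nth Nat.Prime 34 = 149 := by have := Nat.nth_count (p := Nat.Prime) (show Nat.Prime 149 by norm_num); rwa [c34] at this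
  have h35 : Nat.nth Nat.Prime 35 = 151 := by have := Nat.nth_count (p := Nat.Prime) (show Nat.Prime 151 by norm_num); rwa [c35] at this
  have h36 : Nat.nth Nat.Prime 36 = 157 := by have := Nat.nth_count (p := Nat.Prime) (show Nat.Prime 157 by norm_num); rwa [c36] at this
  have h37 : Nat.nth Nat.Prime 37 = 163 := by have := Nat.nth_count (p := Nat.Prime) (show Nat.Prime 163 by norm_num); rwa [c37] at this
  have h38 : Nat.nth Nat.Prime 38 = 167 := by have := Nat.nth_count (p := Nat.Prime) (show Nat.Prime 167 by norm_num); rwa [c38] at this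
  have h39 : Nat.nth Nat.Prime 39 = 173 := by have := Nat.nth_count (p := Nat.Prime) (show Nat.Prime 173 by norm_num); rwa [c39] at this
  have h40 : Nat.nth Nat.Prime 40 = 179 := by have := Nat.nth_count (p := Nat.Prime) (show Nat.Prime 179 by norm_num); rwa [c40] at this
  have h41 : Nat.nth Nat.Prime 41 = 181 := by have := Nat.nth_count (p := Nat.Prime) (show Nat.Prime 181 by norm_num); rwa [c41] at this
  have h42 : Nat.nth Nat.Prime 42 = 191 := by have := Nat.nth_count (p := Nat.Prime) (show Nat.Prime 191 by norm_num); rwa [c42] at this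
  have h43 : Nat.nth Nat.Prime 43 = 193 := by have := Nat.nth_count (p := Nat.Prime) (show Nat.Prime 193 by norm_num); rwa [c43] at this
  have h44 : Nat.nth Nat.Prime 44 = 197 := by have := Nat.nth_count (p := Nat.Prime) (show Nat.Prime 197 by norm_num); rwa [c44] at this
  have h45 : Nat.nth Nat.Prime 45 = 199 := by have := Nat.nth_count (p := Nat.Prime) (show Nat.Prime 199 by norm_num); rwa [c45] at this
  have h46 : Nat.nth Nat.Prime 46 = 211 := by have := Nat.nth_count (p := Nat.Prime) (show Nat.Prime 211 by norm_num); rwa [c46] at this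
  have h47 : Nat.nth Nat.Prime 47 = 223 := by have := Nat.nth_count (p := Nat.Prime) (show Nat.Prime 223 by norm_num); rwa [c47] at this
  have h48 : Nat.nth Nat.Prime 48 = 227 := by have := Nat.nth_count (p := Nat.Prime) (show Nat.Prime 227 by norm_num); rwa [c48] at this
  have h49 : Nat.nth Nat.Prime 49 = 229 := by have := Nat.nth_count (p := Nat.Prime) (show Nat.Prime 229 by norm_num); rwa [c49] at this
  have h50 : Nat.nth Nat.Prime 50 = 233 := by have := Nat.nth_count (p := Nat.Prime) (show Nat.Prime 233 by norm_num); rwa [c50] at this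
  have h51 : Nat.nth Nat.Prime 51 = 239 := by have := Nat.nth_count (p := Nat.Prime) (show Nat.Prime 239 by norm_num); rwa [c51] at this
  have h52 : Nat.nth Nat.Prime 52 = 241 := by have := Nat.nth_count (p := Nat.Prime) (show Nat.Prime 241 by norm_num); rwa [c52] at this
  have h53 : Nat.nth Nat.Prime 53 = 251 := by have := Nat.nth_count (p := Nat.Prime) (show Nat.Prime 251 by norm_num); rwa [c53] at this
  have h54 : Nat.nth Nat.Prime 54 = 257 := by have := Nat.nth_count (p := Nat.Prime) (show Nat.Prime 257 by norm_num); rwa [c54] at this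
  have h55 : Nat.nth Nat.Prime 55 = 263 := by have := Nat.nth_count (p := Nat.Prime) (show Nat.Prime 263 by norm_num); rwa [c55] at this
  have h56 : Nat.nth Nat.Prime 56 = 269 := by have := Nat.nth_count (p := Nat.Prime) (show Nat.Prime 269 by norm_num); rwa [c56] at this
  have h57 : Nat.nth Nat.Prime 57 = 271 := by have := Nat.nth_count (p := Nat.Prime) (show Nat.Prime 271 by norm_num); rwa [c57] at this
  have h58 : Nat.nth Nat.Prime 58 = 277 := by have := Nat.nth_count (p := Nat.Prime) (show Nat.Prime 277 by norm_num); rwa [c58] at this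
  have h59 : Nat.nth Nat.Prime 59 = 281 := by have := Nat.nth_count (p := Nat.Prime) (show Nat.Prime 281 by norm_num); rwa [c59] at this
  have h60 : Nat.nth Nat.Prime 60 = 283 := by have := Nat.nth_count (p := Nat.Prime) (show Nat.Prime 283 by norm_num); rwa [c60] at this
  have h61 : Nat.nth Nat.Prime 61 = 293 := by have := Nat.nth_count (p := Nat.Prime) (show Nat.Prime 293 by norm_num); rwa [c61] at this
  have h62 : Nat.nth Nat.Prime 62 = 307 := by have := Nat.nth_count (p := Nat.Prime) (show Nat.Prime 307 by norm_num); rwa [c62] at this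
  have h63 : Nat.nth Nat.Prime 63 = 311 := by have := Nat.nth_count (p := Nat.Prime) (show Nat.Prime 311 by norm_num); rwa [c63] at this
  have h64 : Nat.nth Nat.Prime 64 = 313 := by have := Nat.nth_count (p := Nat.Prime) (show Nat.Prime 313 by norm_num); rwa [c64] at this
  have h65 : Nat.nth Nat.Prime 65 = 317 := by have := Nat.nth_count (p := Nat.Prime) (show Nat.Prime 317 by norm_num); rwa [c65] at this
  have h66 : Nat.nth Nat.Prime 66 = 331 := by have := Nat.nth_count (p := Nat.Prime) (show Nat.Prime 331 by norm_num); rwa [c66] at this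
  have h67 : Nat.nth Nat.Prime 67 = 337 := by have := Nat.nth_count (p := Nat.Prime) (show Nat.Prime 337 by norm_num); rwa [c67] at this
  have h68 : Nat.nth Nat.Prime 68 = 347 := by have := Nat.nth_count (p := Nat.Prime) (show Nat.Prime 347 by norm_num); rwa [c68] at this
  have h69 : Nat.nth Nat.Prime 69 = 349 := by have := Nat.nth_count (p := Nat.Prime) (show Nat.Prime 349 by norm_num); rwa [c69] at this
  have h70 : Nat.nth Nat.Prime 70 = 353 := by have := Nat.nth_count (p := Nat.Prime) (show Nat.Prime 353 by norm_num); rwa [c70] at this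
  have h71 : Nat.nth Nat.Prime 71 = 359 := by have := Nat.nth_count (p := Nat.Prime) (show Nat.Prime 359 by norm_num); rwa [c71] at this
  intro i hi
  interval_cases i
  exacts [h0, h1, h2, h3, h4, h5, h6, h7, h8, h9, h10, h11, h12, h13, h14, h15, h16, h17, h18, h19, h20, h21, h22, h23, h24, h25, h26, h27, h28, h29, h30, h31, h32, h33, h34, h35, h36, h37, h38, h39, h40, h41, h42, h43, h44, h45, h46, h47, h48, h49, h50, h51, h52, h53, h54, h55, h56, h57, h58, h59, h60, h61, h62, h63, h64, h65, h66, h67, h68, h69, h70, h71]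

end PrimeTable

def check (k : ℕ) (R : List ℕ) : Bool :=
  ((List.range k).all fun i =>
    decide (R.getD i 0 < pl.getD i 0) &&
    decide ((R.getD i 0) % pl.getD i 0 ≠ 0) &&
    decide ((2*k) % pl.getD i 0 ≠ (R.getD i 0) % pl.getD i 0)) &&
  ((List.range (2*k-1)).all fun j =>
    (List.range k).any fun i => decide ((1+j) % pl.getD i 0 = (R.getD i 0) % pl.getD i 0))

lemma natRC_of_list {k : ℕ} (hk1 : 1 ≤ k) (hk : k ≤ 72) {R : List ℕ}
    (hc : check k R = true) : NatRC k (fun i : Fin k => R.getD i 0) := by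
  rw [check, Bool.and_eq_true] at hc
  obtain ⟨h1, h2⟩ := hc
  rw [List.all_eq_true] at h1 h2
  have hp : ∀ i : Fin k, Nat.nth Nat.Prime (i:ℕ) = pl.getD i 0 := fun i =>
    pl_nth i (lt_of_lt_of_le i.isLt hk)
  simp only [List.mem_range, Bool.and_eq_true, decide_eq_true_eq] at h1
  refine ⟨?_, ?_, ?_, ?_⟩
  · intro i
    rw [hp i]
    exact (h1 i i.isLt).1.1
  · intro t ht0 ht2k
    have hj : t - 1 < 2*k - 1 := by omega
    have := h2 (t-1) (List.mem_range.mpr hj)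
    rw [List.any_eq_true] at this
    obtain ⟨i, hi, hie⟩ := this
    rw [List.mem_range] at hi
    simp only [decide_eq_true_eq] at hie
    refine ⟨⟨i, hi⟩, ?_⟩
    show t % _ = _ % _
    rw [hp ⟨i, hi⟩]
    have : 1 + (t - 1) = t := by omega
    rwa [this] at hie
  · intro i h
    have h0 : (0:ℕ) % (Nat.nth Nat.Prime (i:ℕ)) = (R.getD i 0) % Nat.nth Nat.Prime (i:ℕ) := h
    rw [hp i] at h0
    exact (h1 i i.isLt).1.2 (by simpa using h0.symm)
  · intro i h
    have h0 : (2*k) % (Nat.nth Nat.Prime (i:ℕ)) = (R.getD i 0) % Nat.nth Nat.Prime (i:ℕ) := h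
    rw [hp i] at h0
    exact (h1 i i.isLt).2 h0



lemma count_prime_le (k : ℕ) : Nat.count Nat.Prime k ≤ 2 + 2 * (k / 6) := by
  classical
  rw [Nat.count_eq_card_filter_range]
  set S : Finset ℕ := {x ∈ Finset.range k | Nat.Prime x} with hS
  set S5 : Finset ℕ := S.filter (fun p => 5 ≤ p) with hS5
  have hsub : S ⊆ S5 ∪ {2, 3} := by
    intro p hp
    have hp' : p < k ∧ p.Prime := by simpa [hS] using hp
    rcases le_or_gt 5 p with h5 | h5
    · exact Finset.mem_union_left _ (Finset.mem_filter.mpr ⟨hp, h5⟩)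
    · have h2 := hp'.2.two_le
      have : p ≠ 4 := by rintro rfl; exact absurd hp'.2 (by decide)
      interval_cases p
      · exact Finset.mem_union_right _ (by decide)
      · exact Finset.mem_union_right _ (by decide)
      · exact absurd hp'.2 (by decide)
  have h1 : S.card ≤ S5.card + 2 := by
    calc S.card ≤ (S5 ∪ {2, 3}).card := Finset.card_le_card hsub
      _ ≤ S5.card + ({2, 3} : Finset ℕ).card := Finset.card_union_le _ _
      _ ≤ S5.card + 2 := by norm_num
  have h2 : S5.card ≤ 2 * (S5.image (fun p => (p + 1) / 6)).card := by
    apply Finset.card_le_mul_card_image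
    intro a _
    have hsub2 : (S5.filter fun x => (x + 1) / 6 = a) ⊆ {6*a - 1, 6*a + 1} := by
      intro p hp
      obtain ⟨hpS5, hpa⟩ := Finset.mem_filter.mp hp
      obtain ⟨hpS, hp5⟩ := Finset.mem_filter.mp hpS5
      have hprime : p.Prime := (Finset.mem_filter.mp hpS).2
      have hd2 : ¬ (2 ∣ p) := by
        intro h
        rcases (Nat.Prime.eq_one_or_self_of_dvd hprime 2 h) with h' | h' <;> omega
      have hd3 : ¬ (3 ∣ p) := by
        intro h
        rcases (Nat.Prime.eq_one_or_self_of_dvd hprime 3 h) with h' | h' <;> omega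
      have : p = 6*a - 1 ∨ p = 6*a + 1 := by omega
      simpa using this
    calc (S5.filter fun x => (x + 1) / 6 = a).card ≤ ({6*a - 1, 6*a + 1} : Finset ℕ).card :=
          Finset.card_le_card hsub2
      _ ≤ 2 := Finset.card_insert_le _ _ |>.trans (by norm_num)
  have h3 : (S5.image (fun p => (p + 1) / 6)).card ≤ k / 6 := by
    have : (S5.image (fun p => (p + 1) / 6)) ⊆ Finset.Icc 1 (k / 6) := by
      intro a ha
      obtain ⟨p, hp, rfl⟩ := Finset.mem_image.mp ha
      obtain ⟨hpS, hp5⟩ := Finset.mem_filter.mp hp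
      have hpk : p < k := Finset.mem_range.mp (Finset.mem_filter.mp hpS).1
      have hle : p + 1 ≤ k := by omega
      have := Nat.div_le_div_right (c := 6) hle
      simp only [Finset.mem_Icc]
      omega
    calc _ ≤ (Finset.Icc 1 (k / 6)).card := Finset.card_le_card this
      _ = k / 6 := by rw [Nat.card_Icc]; omega
  omega

private lemma Bcard (g3 g5 : ℕ) (h3 : g3 = 1 ∨ g3 = 2) (h5 : g5 = 1 ∨ g5 = 2) :
    ((Finset.range 15).filter (fun b => ¬ (b % 3 = g3) ∧ ¬ (b % 5 = g5))).card = 8 := by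
  rcases h3 with rfl | rfl <;> rcases h5 with rfl | rfl <;> decide

lemma natRC_large (k : ℕ) (hk : 72 ≤ k) : ∃ r : Fin k → ℕ, NatRC k r := by
  classical
  obtain ⟨γ3, hγ3a, hγ3k⟩ : ∃ g, (g = 1 ∨ g = 2) ∧ g ≠ k % 3 := by
    refine ⟨if k % 3 = 1 then 2 else 1, ?_, ?_⟩ <;> split <;> omega
  obtain ⟨γ5, hγ5a, hγ5k⟩ : ∃ g, (g = 1 ∨ g = 2) ∧ g ≠ k % 5 := by
    refine ⟨if k % 5 = 1 then 2 else 1, ?_, ?_⟩ <;> split <;> omega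
  set Unc : Finset ℕ := (Finset.Icc 1 (k-1)).filter (fun j => ¬ (j % 3 = γ3) ∧ ¬ (j % 5 = γ5))
    with hUnc
  set Univ : Finset (Fin k) := Finset.univ.filter (fun i => k ≤ pp (i : ℕ)) with hUniv
  -- cardinality bounds
  have hUncCard : Unc.card ≤ 8 * ((k + 14) / 15) := by
    have hmaps : ∀ j ∈ Unc,
        (j % 15, j / 15) ∈
          ((Finset.range 15).filter (fun b => ¬ (b % 3 = γ3) ∧ ¬ (b % 5 = γ5))) ×ˢ
            Finset.range ((k + 14) / 15) := by
      intro j hj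
      have hjf := Finset.mem_filter.mp hj
      have hjI := Finset.mem_Icc.mp hjf.1
      have hj3 := hjf.2.1
      have hj5 := hjf.2.2
      simp only [Finset.mem_product, Finset.mem_filter, Finset.mem_range]
      refine ⟨⟨by omega, by omega, by omega⟩, by omega⟩
    have hinj : (↑Unc : Set ℕ).InjOn (fun j => (j % 15, j / 15)) := by
      intro a _ b _ hab
      simp only [Prod.mk.injEq] at hab
      omega
    calc Unc.card ≤ _ := Finset.card_le_card_of_injOn _ hmaps hinj
      _ = 8 * ((k + 14) / 15) := by
          rw [Finset.card_product, Bcard γ3 γ5 hγ3a hγ5a, Finset.card_range]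
  have hUnivCard : k - Nat.count Nat.Prime k ≤ Univ.card := by
    have hsplit := Finset.card_filter_add_card_filter_not
      (s := (Finset.univ : Finset (Fin k))) (p := fun i => k ≤ pp (i : ℕ))
    rw [← hUniv] at hsplit
    have hcompl : (Finset.univ.filter (fun i : Fin k => ¬ (k ≤ pp (i : ℕ)))).card ≤
        Nat.count Nat.Prime k := by
      have hmaps : ∀ i ∈ Finset.univ.filter (fun i : Fin k => ¬ (k ≤ pp (i : ℕ))),
          (i : ℕ) ∈ Finset.range (Nat.count Nat.Prime k) := by
        intro i hi
        have : pp (i : ℕ) < k := by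
          have := (Finset.mem_filter.mp hi).2
          omega
        rw [Finset.mem_range]
        exact (Nat.lt_nth_iff_count_lt Nat.infinite_setOf_prime).mpr this
      calc _ ≤ (Finset.range (Nat.count Nat.Prime k)).card :=
            Finset.card_le_card_of_injOn _ hmaps (fun a _ b _ h => Fin.ext h)
        _ = _ := Finset.card_range _
    have hcu : (Finset.univ : Finset (Fin k)).card = k := by simp
    omega
  have hπ := count_prime_le k
  have hcard : Unc.card ≤ Univ.card := by
    have harith : 8 * ((k + 14) / 15) ≤ k - 2 - 2 * (k / 6) := by omega
    omega
  -- the matching between uncovered points and large primes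
  set oU := Univ.orderIsoOfFin rfl with hoU
  set oN := Unc.orderIsoOfFin rfl with hoN
  set e : Fin Unc.card → Fin k := fun a => (oU (Fin.castLE hcard a) : Fin k) with he
  have he_inj : Function.Injective e := by
    intro a b hab
    have : oU (Fin.castLE hcard a) = oU (Fin.castLE hcard b) := Subtype.ext hab
    have := oU.injective this
    exact Fin.ext (by simpa using congrArg Fin.val this)
  have he_mem : ∀ a, k ≤ pp ((e a : Fin k) : ℕ) := by
    intro a
    have h2 := (oU (Fin.castLE hcard a)).2
    exact (Finset.mem_filter.mp h2).2
  set u : Fin Unc.card → ℕ := fun a => ((oN a : ℕ)) with hu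
  have hu_mem : ∀ a, u a ∈ Unc := fun a => (oN a).2
  have hu_bounds : ∀ a, 1 ≤ u a ∧ u a ≤ k - 1 := by
    intro a
    have := Finset.mem_filter.mp (hu_mem a)
    exact Finset.mem_Icc.mp this.1
  -- the residue system
  set r : Fin k → ℕ := fun i =>
    if (i : ℕ) = 0 then 1
    else if hi : ∃ a : Fin Unc.card, e a = i then 2 * u hi.choose % pp (i : ℕ)
    else if (i : ℕ) = 1 then (2*γ3) % 3
    else if (i : ℕ) = 2 then (2*γ5) % 5
    else if (2*k) % pp (i : ℕ) = 1 then 2 else 1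
    with hr
  -- facts about pp
  have hpp0 : pp 0 = 2 := Nat.nth_prime_zero_eq_two
  have hpp1 : pp 1 = 3 := Nat.nth_prime_one_eq_three
  have hpp2 : pp 2 = 5 := by
    have hc : Nat.count Nat.Prime 5 = 2 := by decide
    have := Nat.nth_count (p := Nat.Prime) (by norm_num : Nat.Prime 5)
    rwa [hc] at this
  have hmono : ∀ i j : ℕ, i ≤ j → pp i ≤ pp j :=
    fun i j h => Nat.nth_monotone Nat.infinite_setOf_prime h
  -- value lemmas for r
  have hre : ∀ a : Fin Unc.card, r (e a) = 2 * u a % pp ((e a : Fin k) : ℕ) := by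
    intro a
    have h0 : ((e a : Fin k) : ℕ) ≠ 0 := by
      intro h
      have := he_mem a
      rw [h, hpp0] at this
      omega
    have hex : ∃ b : Fin Unc.card, e b = e a := ⟨a, rfl⟩
    have hch : hex.choose = a := he_inj hex.choose_spec
    simp only [hr]
    rw [if_neg h0, dif_pos hex, hch]
  have hnotex : ∀ i : Fin k, (i : ℕ) < 3 → ¬ (∃ a : Fin Unc.card, e a = i) := by
    intro i hi3 ⟨a, ha⟩
    have := he_mem a
    rw [ha] at this
    have h5 : pp ((i : Fin k) : ℕ) ≤ pp 2 := hmono _ 2 (by omega)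
    rw [hpp2] at h5
    omega
  have hr0 : ∀ i : Fin k, (i : ℕ) = 0 → r i = 1 := by
    intro i h
    simp only [hr]
    rw [if_pos h]
  have hr1 : ∀ i : Fin k, (i : ℕ) = 1 → r i = (2*γ3) % 3 := by
    intro i h
    simp only [hr]
    rw [if_neg (by omega), dif_neg (hnotex i (by omega)), if_pos h]
  have hr2 : ∀ i : Fin k, (i : ℕ) = 2 → r i = (2*γ5) % 5 := by
    intro i h
    simp only [hr]
    rw [if_neg (by omega), dif_neg (hnotex i (by omega)), if_neg (by omega), if_pos h]
  -- default value
  have hrd : ∀ i : Fin k, (i : ℕ) ≠ 0 → (i : ℕ) ≠ 1 → (i : ℕ) ≠ 2 →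
      ¬ (∃ a : Fin Unc.card, e a = i) →
      r i = if (2*k) % pp (i : ℕ) = 1 then 2 else 1 := by
    intro i h0 h1 h2 hex
    simp only [hr]
    rw [if_neg h0, dif_neg hex, if_neg h1, if_neg h2]
  have hp3 : ∀ i : Fin k, (i : ℕ) ≠ 0 → 3 ≤ pp (i : ℕ) := by
    intro i h0
    have := hmono 1 (i : ℕ) (by omega)
    omega
  refine ⟨r, ?_, ?_, ?_, ?_⟩
  · -- residues are reduced
    intro i
    by_cases h0 : (i : ℕ) = 0
    · rw [hr0 i h0, h0, hpp0]; omega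
    by_cases hex : ∃ a : Fin Unc.card, e a = i
    · obtain ⟨a, rfl⟩ := hex
      rw [hre a]
      exact Nat.mod_lt _ (pp_pos _)
    by_cases h1 : (i : ℕ) = 1
    · rw [hr1 i h1, h1, hpp1]; omega
    by_cases h2 : (i : ℕ) = 2
    · rw [hr2 i h2, h2, hpp2]; omega
    · rw [hrd i h0 h1 h2 hex]
      have := hp3 i h0
      split <;> omega
  · -- coverage
    intro t ht0 ht2
    by_cases hodd : t % 2 = 1
    · obtain ⟨i0, hv⟩ : ∃ i0 : Fin k, (i0 : ℕ) = 0 := ⟨⟨0, by omega⟩, rfl⟩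
      refine ⟨i0, ?_⟩
      show t % pp (i0 : ℕ) = r i0 % pp (i0 : ℕ)
      rw [hr0 i0 hv, hv, hpp0]
      omega
    · have hjt : t = 2 * (t / 2) := by omega
      set j := t / 2 with hj
      have hj1 : 1 ≤ j := by omega
      have hjk : j ≤ k - 1 := by omega
      by_cases hj3 : j % 3 = γ3
      · obtain ⟨i1, hv⟩ : ∃ i1 : Fin k, (i1 : ℕ) = 1 := ⟨⟨1, by omega⟩, rfl⟩
        refine ⟨i1, ?_⟩
        show t % pp (i1 : ℕ) = r i1 % pp (i1 : ℕ)
        rw [hr1 i1 hv, hv, hpp1]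
        omega
      by_cases hj5 : j % 5 = γ5
      · obtain ⟨i2, hv⟩ : ∃ i2 : Fin k, (i2 : ℕ) = 2 := ⟨⟨2, by omega⟩, rfl⟩
        refine ⟨i2, ?_⟩
        show t % pp (i2 : ℕ) = r i2 % pp (i2 : ℕ)
        rw [hr2 i2 hv, hv, hpp2]
        omega
      · have hjUnc : j ∈ Unc := by
          rw [hUnc]
          exact Finset.mem_filter.mpr ⟨Finset.mem_Icc.mpr ⟨hj1, hjk⟩, hj3, hj5⟩
        have hua : u (oN.symm ⟨j, hjUnc⟩) = j := by
          show ((oN (oN.symm ⟨j, hjUnc⟩)) : ℕ) = j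
          rw [OrderIso.apply_symm_apply]
        refine ⟨e (oN.symm ⟨j, hjUnc⟩), ?_⟩
        show t % pp _ = r _ % pp _
        rw [hre _, hua, ← hjt]
        exact (Nat.mod_mod_of_dvd _ dvd_rfl).symm
  · -- 0 is not covered
    intro i hcon
    have hcon' : 0 % pp (i : ℕ) = r i % pp (i : ℕ) := hcon
    rw [Nat.zero_mod] at hcon'
    by_cases h0 : (i : ℕ) = 0
    · rw [hr0 i h0, h0, hpp0] at hcon'
      omega
    by_cases hex : ∃ a : Fin Unc.card, e a = i
    · obtain ⟨a, rfl⟩ := hex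
      rw [hre a, Nat.mod_mod_of_dvd _ dvd_rfl] at hcon'
      have hdvd : pp ((e a : Fin k) : ℕ) ∣ 2 * u a := Nat.dvd_of_mod_eq_zero hcon'.symm
      have hub := hu_bounds a
      have hmem := he_mem a
      rcases ((Nat.Prime.dvd_mul (prime_pp _)).mp hdvd) with h | h
      · have := Nat.le_of_dvd (by norm_num) h
        omega
      · have := Nat.le_of_dvd (by omega) h
        omega
    by_cases h1 : (i : ℕ) = 1
    · rw [hr1 i h1, h1, hpp1] at hcon'
      rcases hγ3a with rfl | rfl <;> omega
    by_cases h2 : (i : ℕ) = 2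
    · rw [hr2 i h2, h2, hpp2] at hcon'
      rcases hγ5a with rfl | rfl <;> omega
    · rw [hrd i h0 h1 h2 hex] at hcon'
      have := hp3 i h0
      split at hcon' <;> rw [Nat.mod_eq_of_lt (by omega)] at hcon' <;> omega
  · -- 2k is not covered
    intro i hcon
    have hcon' : (2 * k) % pp (i : ℕ) = r i % pp (i : ℕ) := hcon
    by_cases h0 : (i : ℕ) = 0
    · rw [hr0 i h0, h0, hpp0] at hcon'
      omega
    by_cases hex : ∃ a : Fin Unc.card, e a = i
    · obtain ⟨a, rfl⟩ := hex
      rw [hre a, Nat.mod_mod_of_dvd _ dvd_rfl] at hcon'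
      have hub := hu_bounds a
      have hmem := he_mem a
      have hle : 2 * u a ≤ 2 * k := by omega
      have hmeq : (2 * u a) ≡ (2 * k) [MOD pp ((e a : Fin k) : ℕ)] := hcon'.symm
      have hdvd : pp ((e a : Fin k) : ℕ) ∣ 2 * k - 2 * u a := (Nat.modEq_iff_dvd' hle).mp hmeq
      have h2d : 2 * k - 2 * u a = 2 * (k - u a) := by omega
      rw [h2d] at hdvd
      rcases ((Nat.Prime.dvd_mul (prime_pp _)).mp hdvd) with h | h
      · have := Nat.le_of_dvd (by norm_num) h
        omega
      · have := Nat.le_of_dvd (by omega) h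
        omega
    by_cases h1 : (i : ℕ) = 1
    · rw [hr1 i h1, h1, hpp1] at hcon'
      rcases hγ3a with rfl | rfl <;> omega
    by_cases h2 : (i : ℕ) = 2
    · rw [hr2 i h2, h2, hpp2] at hcon'
      rcases hγ5a with rfl | rfl <;> omega
    · rw [hrd i h0 h1 h2 hex] at hcon'
      have := hp3 i h0
      split at hcon'
      · rw [show (2:ℕ) % pp (i : ℕ) = 2 from Nat.mod_eq_of_lt (by omega)] at hcon'
        omega
      · rw [show (1:ℕ) % pp (i : ℕ) = 1 from Nat.mod_eq_of_lt (by omega)] at hcon'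
        omega


lemma natRC_small (k : ℕ) (hk1 : 1 ≤ k) (hk : k ≤ 71) : ∃ r : Fin k → ℕ, NatRC k r := by
  interval_cases k
  · exact ⟨_, natRC_of_list (by norm_num) (by norm_num) (R := [1]) (by decide)⟩
  · exact ⟨_, natRC_of_list (by norm_num) (by norm_num) (R := [1, 2]) (by decide)⟩
  · exact ⟨_, natRC_of_list (by norm_num) (by norm_num) (R := [1, 1, 2]) (by decide)⟩
  · exact ⟨_, natRC_of_list (by norm_num) (by norm_num) (R := [1, 1, 2, 6]) (by decide)⟩
  · exact ⟨_, natRC_of_list (by norm_num) (by norm_num) (R := [1, 2, 4, 6, 7]) (by decide)⟩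
  · exact ⟨_, natRC_of_list (by norm_num) (by norm_num) (R := [1, 2, 4, 1, 6, 10]) (by decide)⟩
  · exact ⟨_, natRC_of_list (by norm_num) (by norm_num) (R := [1, 1, 2, 6, 10, 12, 8]) (by decide)⟩
  · exact ⟨_, natRC_of_list (by norm_num) (by norm_num) (R := [1, 2, 2, 4, 6, 10, 6, 13]) (by decide)⟩
  · exact ⟨_, natRC_of_list (by norm_num) (by norm_num) (R := [1, 2, 2, 2, 6, 4, 2, 10, 8]) (by decide)⟩
  · exact ⟨_, natRC_of_list (by norm_num) (by norm_num) (R := [1, 1, 3, 2, 3, 12, 6, 6, 5, 28]) (by decide)⟩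
  · exact ⟨_, natRC_of_list (by norm_num) (by norm_num) (R := [1, 2, 3, 6, 4, 3, 12, 10, 8, 18, 14]) (by decide)⟩
  · exact ⟨_, natRC_of_list (by norm_num) (by norm_num) (R := [1, 1, 2, 2, 8, 6, 1, 1, 10, 12, 4, 14]) (by decide)⟩
  · exact ⟨_, natRC_of_list (by norm_num) (by norm_num) (R := [1, 1, 2, 4, 2, 8, 6, 3, 14, 16, 18, 20, 2]) (by decide)⟩
  · exact ⟨_, natRC_of_list (by norm_num) (by norm_num) (R := [1, 2, 1, 1, 8, 4, 9, 16, 2, 24, 20, 12, 18, 10]) (by decide)⟩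
  · exact ⟨_, natRC_of_list (by norm_num) (by norm_num) (R := [1, 2, 2, 6, 2, 1, 12, 18, 20, 4, 26, 10, 8, 28, 16]) (by decide)⟩
  · exact ⟨_, natRC_of_list (by norm_num) (by norm_num) (R := [1, 1, 4, 6, 1, 5, 2, 3, 8, 16, 30, 24, 14, 28, 26, 20]) (by decide)⟩
  · exact ⟨_, natRC_of_list (by norm_num) (by norm_num) (R := [1, 2, 2, 2, 6, 5, 7, 10, 4, 27, 2, 15, 28, 2, 38, 25, 25]) (by decide)⟩
  · exact ⟨_, natRC_of_list (by norm_num) (by norm_num) (R := [1, 2, 4, 2, 6, 12, 1, 3, 10, 27, 6, 27, 24, 14, 3, 32, 39, 57]) (by decide)⟩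
  · exact ⟨_, natRC_of_list (by norm_num) (by norm_num) (R := [1, 1, 4, 6, 3, 5, 12, 11, 14, 4, 2, 8, 22, 26, 6, 34, 32, 16, 10]) (by decide)⟩
  · exact ⟨_, natRC_of_list (by norm_num) (by norm_num) (R := [1, 2, 1, 3, 4, 10, 11, 8, 12, 9, 22, 20, 34, 16, 32, 2, 14, 18, 6, 30]) (by decide)⟩
  · exact ⟨_, natRC_of_list (by norm_num) (by norm_num) (R := [1, 1, 1, 6, 4, 6, 11, 16, 14, 22, 4, 3, 24, 38, 2, 30, 12, 36, 18, 8, 32]) (by decide)⟩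
  · exact ⟨_, natRC_of_list (by norm_num) (by norm_num) (R := [1, 1, 2, 1, 4, 7, 1, 11, 1, 6, 7, 14, 10, 12, 10, 9, 24, 32, 59, 27, 24, 55]) (by decide)⟩
  · exact ⟨_, natRC_of_list (by norm_num) (by norm_num) (R := [1, 2, 4, 6, 5, 5, 2, 15, 15, 10, 26, 3, 18, 28, 6, 12, 8, 24, 22, 32, 4, 30, 42]) (by decide)⟩
  · exact ⟨_, natRC_of_list (by norm_num) (by norm_num) (R := [1, 2, 1, 5, 2, 4, 11, 3, 18, 13, 3, 10, 39, 26, 42, 24, 35, 20, 51, 55, 25, 47, 28, 30]) (by decide)⟩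
  · exact ⟨_, natRC_of_list (by norm_num) (by norm_num) (R := [1, 1, 4, 2, 9, 6, 12, 4, 18, 24, 8, 7, 7, 10, 34, 28, 4, 40, 26, 36, 38, 22, 14, 2, 30]) (by decide)⟩
  · exact ⟨_, natRC_of_list (by norm_num) (by norm_num) (R := [1, 2, 1, 2, 2, 12, 11, 4, 7, 5, 19, 20, 7, 8, 22, 14, 26, 2, 18, 10, 32, 44, 40, 12, 36, 24]) (by decide)⟩
  · exact ⟨_, natRC_of_list (by norm_num) (by norm_num) (R := [1, 1, 3, 1, 6, 3, 10, 8, 2, 14, 18, 7, 6, 4, 5, 20, 12, 26, 36, 50, 32, 48, 38, 30, 34, 40, 24]) (by decide)⟩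
  · exact ⟨_, natRC_of_list (by norm_num) (by norm_num) (R := [1, 1, 3, 6, 8, 12, 16, 10, 8, 24, 2, 26, 22, 38, 18, 8, 52, 32, 14, 4, 34, 42, 44, 20, 46, 40, 6, 36]) (by decide)⟩
  · exact ⟨_, natRC_of_list (by norm_num) (by norm_num) (R := [1, 2, 2, 1, 1, 3, 11, 18, 4, 23, 16, 36, 30, 40, 2, 14, 6, 50, 12, 10, 26, 18, 46, 24, 54, 38, 8, 44, 48]) (by decide)⟩
  · exact ⟨_, natRC_of_list (by norm_num) (by norm_num) (R := [1, 1, 2, 6, 10, 4, 3, 14, 1, 15, 12, 1, 16, 26, 46, 2, 36, 58, 42, 52, 18, 22, 50, 28, 8, 54, 10, 4, 6, 48]) (by decide)⟩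
  · exact ⟨_, natRC_of_list (by norm_num) (by norm_num) (R := [1, 1, 1, 4, 2, 12, 3, 8, 19, 21, 13, 11, 30, 14, 35, 38, 55, 5, 43, 42, 47, 41, 67, 46, 55, 8, 40, 22, 75, 39, 31]) (by decide)⟩
  · exact ⟨_, natRC_of_list (by norm_num) (by norm_num) (R := [1, 2, 3, 4, 10, 8, 3, 10, 16, 2, 28, 30, 22, 12, 8, 40, 6, 26, 56, 24, 44, 18, 38, 4, 36, 52, 58, 42, 50, 32, 14, 46]) (by decide)⟩
  · exact ⟨_, natRC_of_list (by norm_num) (by norm_num) (R := [1, 2, 3, 4, 7, 11, 13, 1, 5, 4, 12, 10, 2, 11, 17, 3, 6, 44, 20, 46, 14, 52, 34, 26, 38, 40, 16, 22, 60, 36, 50, 42, 48]) (by decide)⟩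
  · exact ⟨_, natRC_of_list (by norm_num) (by norm_num) (R := [1, 1, 4, 3, 9, 1, 11, 3, 16, 15, 30, 18, 2, 15, 13, 26, 32, 38, 4, 48, 12, 64, 8, 66, 50, 24, 54, 20, 14, 6, 56, 36, 16, 46]) (by decide)⟩
  · exact ⟨_, natRC_of_list (by norm_num) (by norm_num) (R := [1, 2, 4, 2, 6, 10, 1, 3, 20, 17, 17, 3, 12, 42, 15, 34, 7, 46, 34, 19, 53, 43, 8, 69, 57, 60, 73, 27, 24, 100, 54, 107, 82, 2, 123]) (by decide)⟩
  · exact ⟨_, natRC_of_list (by norm_num) (by norm_num) (R := [1, 1, 3, 5, 2, 5, 9, 11, 22, 23, 8, 2, 19, 10, 36, 24, 20, 50, 32, 4, 44, 28, 48, 38, 6, 42, 34, 66, 64, 56, 62, 58, 14, 12, 54, 16]) (by decide)⟩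
  · exact ⟨_, natRC_of_list (by norm_num) (by norm_num) (R := [1, 1, 3, 5, 2, 3, 5, 1, 4, 15, 28, 34, 18, 40, 7, 24, 2, 42, 6, 64, 36, 70, 12, 14, 72, 20, 8, 32, 66, 52, 60, 10, 62, 30, 48, 38, 16]) (by decide)⟩
  · exact ⟨_, natRC_of_list (by norm_num) (by norm_num) (R := [1, 2, 4, 2, 8, 3, 7, 10, 3, 19, 4, 30, 29, 1, 46, 9, 40, 8, 58, 38, 22, 20, 34, 32, 68, 14, 12, 28, 18, 74, 6, 54, 42, 36, 64, 56, 50, 60]) (by decide)⟩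
  · exact ⟨_, natRC_of_list (by norm_num) (by norm_num) (R := [1, 1, 1, 6, 8, 12, 9, 13, 6, 24, 10, 6, 35, 7, 44, 22, 3, 16, 18, 4, 34, 30, 42, 40, 58, 2, 66, 28, 46, 48, 14, 38, 12, 68, 54, 36, 26, 70, 74]) (by decide)⟩
  · exact ⟨_, natRC_of_list (by norm_num) (by norm_num) (R := [1, 1, 2, 2, 5, 12, 2, 11, 16, 18, 15, 13, 12, 8, 21, 48, 34, 3, 36, 24, 28, 20, 66, 72, 40, 26, 32, 4, 52, 16, 2, 22, 78, 74, 54, 10, 6, 56, 58, 14]) (by decide)⟩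
  · exact ⟨_, natRC_of_list (by norm_num) (by norm_num) (R := [1, 2, 1, 4, 1, 12, 3, 18, 8, 10, 2, 6, 29, 7, 42, 9, 32, 15, 44, 26, 36, 16, 8, 52, 66, 56, 30, 38, 14, 58, 22, 60, 4, 24, 40, 78, 48, 46, 74, 28, 72]) (by decide)⟩
  · exact ⟨_, natRC_of_list (by norm_num) (by norm_num) (R := [1, 1, 3, 2, 4, 2, 15, 14, 4, 11, 10, 7, 15, 36, 7, 48, 58, 19, 42, 20, 28, 70, 68, 82, 60, 22, 78, 12, 34, 76, 74, 18, 64, 62, 16, 14, 46, 30, 8, 24, 6, 38]) (by decide)⟩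
  · exact ⟨_, natRC_of_list (by norm_num) (by norm_num) (R := [1, 1, 3, 4, 1, 10, 12, 11, 16, 9, 22, 2, 2, 4, 28, 3, 54, 14, 7, 50, 42, 36, 48, 8, 64, 78, 58, 10, 66, 82, 26, 18, 24, 46, 6, 52, 60, 70, 44, 72, 32, 20, 40]) (by decide)⟩
  · exact ⟨_, natRC_of_list (by norm_num) (by norm_num) (R := [1, 2, 1, 1, 8, 8, 11, 4, 17, 10, 25, 21, 11, 28, 22, 24, 44, 48, 9, 6, 66, 72, 78, 84, 70, 12, 18, 14, 46, 60, 54, 4, 38, 50, 82, 34, 64, 16, 36, 20, 32, 26, 30, 2]) (by decide)⟩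
  · exact ⟨_, natRC_of_list (by norm_num) (by norm_num) (R := [1, 2, 4, 3, 5, 6, 4, 6, 11, 10, 14, 13, 21, 31, 5, 17, 54, 17, 8, 64, 13, 42, 26, 58, 66, 12, 16, 60, 48, 46, 18, 22, 80, 20, 84, 30, 40, 76, 2, 28, 88, 56, 36, 72, 6]) (by decide)⟩
  · exact ⟨_, natRC_of_list (by norm_num) (by norm_num) (R := [1, 1, 4, 6, 8, 8, 12, 15, 4, 20, 6, 16, 25, 11, 2, 12, 14, 22, 18, 10, 4, 76, 32, 64, 90, 88, 58, 84, 8, 30, 82, 80, 62, 44, 36, 74, 48, 70, 24, 86, 42, 28, 56, 26, 40, 38]) (by decide)⟩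
  · exact ⟨_, natRC_of_list (by norm_num) (by norm_num) (R := [1, 2, 2, 1, 7, 12, 7, 6, 8, 28, 22, 16, 33, 20, 19, 39, 19, 7, 34, 46, 11, 14, 6, 1, 88, 76, 32, 56, 18, 86, 30, 50, 64, 70, 52, 38, 26, 82, 62, 42, 10, 4, 48, 80, 72, 2, 60]) (by decide)⟩
  · exact ⟨_, natRC_of_list (by norm_num) (by norm_num) (R := [1, 2, 4, 2, 9, 7, 6, 9, 7, 20, 2, 6, 3, 26, 1, 5, 15, 60, 54, 34, 9, 66, 32, 46, 90, 70, 94, 22, 38, 64, 36, 4, 18, 14, 86, 12, 56, 50, 84, 62, 52, 88, 92, 16, 8, 24, 10, 68]) (by decide)⟩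
  · exact ⟨_, natRC_of_list (by norm_num) (by norm_num) (R := [1, 1, 1, 1, 8, 9, 4, 12, 16, 27, 6, 4, 36, 41, 7, 41, 1, 31, 11, 30, 58, 64, 40, 48, 82, 12, 34, 20, 42, 96, 8, 24, 76, 6, 44, 2, 38, 86, 74, 26, 14, 10, 80, 90, 18, 88, 32, 66, 46]) (by decide)⟩
  · exact ⟨_, natRC_of_list (by norm_num) (by norm_num) (R := [1, 2, 4, 6, 10, 7, 1, 17, 19, 10, 8, 36, 2, 8, 8, 5, 7, 52, 60, 56, 2, 48, 40, 16, 22, 92, 20, 14, 78, 32, 86, 38, 12, 76, 90, 80, 64, 24, 30, 28, 26, 96, 44, 34, 72, 98, 82, 6, 4, 50]) (by decide)⟩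
  · exact ⟨_, natRC_of_list (by norm_num) (by norm_num) (R := [1, 1, 3, 2, 7, 2, 11, 13, 16, 5, 6, 12, 2, 8, 26, 20, 39, 5, 22, 9, 60, 21, 74, 10, 14, 38, 32, 50, 58, 40, 18, 46, 88, 30, 82, 92, 24, 96, 54, 36, 44, 48, 76, 52, 64, 4, 42, 78, 90, 72, 56]) (by decide)⟩
  · exact ⟨_, natRC_of_list (by norm_num) (by norm_num) (R := [1, 1, 1, 1, 8, 12, 10, 10, 18, 15, 18, 20, 2, 38, 6, 45, 58, 46, 26, 4, 42, 36, 9, 56, 76, 82, 74, 34, 60, 14, 100, 66, 22, 50, 10, 96, 32, 70, 16, 68, 72, 24, 28, 62, 40, 86, 8, 90, 88, 80, 30, 54]) (by decide)⟩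
  · exact ⟨_, natRC_of_list (by norm_num) (by norm_num) (R := [1, 2, 4, 6, 1, 4, 2, 12, 10, 13, 5, 20, 35, 23, 26, 40, 44, 24, 29, 17, 17, 60, 46, 14, 16, 64, 12, 74, 32, 104, 82, 10, 72, 98, 22, 84, 52, 8, 38, 54, 80, 58, 28, 68, 6, 34, 86, 4, 2, 20, 48, 18, 92]) (by decide)⟩
  · exact ⟨_, natRC_of_list (by norm_num) (by norm_num) (R := [1, 1, 4, 1, 2, 2, 2, 1, 4, 26, 12, 6, 38, 34, 15, 37, 29, 6, 27, 52, 72, 17, 44, 22, 10, 66, 32, 8, 82, 14, 30, 84, 24, 40, 18, 102, 20, 106, 50, 16, 54, 98, 76, 64, 36, 86, 48, 56, 42, 78, 100, 60, 70, 104]) (by decide)⟩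
  · exact ⟨_, natRC_of_list (by norm_num) (by norm_num) (R := [1, 1, 4, 1, 3, 10, 12, 7, 5, 5, 5, 2, 20, 18, 31, 41, 41, 9, 39, 25, 11, 29, 32, 44, 4, 30, 56, 34, 40, 88, 42, 24, 68, 82, 50, 48, 90, 66, 86, 52, 12, 26, 80, 8, 58, 38, 60, 10, 36, 6, 54, 76, 16, 72, 22]) (by decide)⟩
  · exact ⟨_, natRC_of_list (by norm_num) (by norm_num) (R := [1, 2, 4, 1, 1, 2, 4, 15, 8, 17, 14, 14, 3, 8, 4, 10, 9, 23, 48, 58, 50, 13, 62, 86, 20, 12, 72, 18, 96, 104, 70, 26, 16, 80, 36, 64, 6, 2, 52, 110, 56, 66, 30, 82, 22, 74, 90, 108, 102, 24, 60, 42, 100, 40, 32, 28]) (by decide)⟩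
  · exact ⟨_, natRC_of_list (by norm_num) (by norm_num) (R := [1, 1, 2, 6, 1, 4, 16, 8, 1, 2, 12, 28, 26, 15, 6, 47, 30, 56, 27, 44, 18, 46, 34, 78, 48, 66, 68, 104, 72, 106, 42, 98, 32, 38, 64, 52, 10, 82, 54, 40, 112, 20, 86, 110, 14, 62, 80, 36, 92, 96, 16, 88, 76, 90, 22, 2, 8]) (by decide)⟩
  · exact ⟨_, natRC_of_list (by norm_num) (by norm_num) (R := [1, 1, 3, 1, 5, 8, 2, 5, 22, 17, 1, 16, 2, 14, 24, 6, 19, 47, 52, 68, 30, 1, 21, 66, 60, 72, 90, 20, 86, 28, 12, 40, 54, 48, 4, 110, 98, 74, 18, 26, 56, 102, 92, 42, 82, 8, 10, 96, 58, 36, 50, 106, 44, 64, 112, 32, 88, 76]) (by decide)⟩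
  · exact ⟨_, natRC_of_list (by norm_num) (by norm_num) (R := [1, 2, 1, 1, 4, 2, 10, 14, 5, 4, 7, 32, 12, 33, 36, 10, 15, 51, 26, 54, 22, 66, 70, 25, 86, 88, 60, 90, 72, 30, 48, 24, 58, 46, 96, 6, 98, 16, 104, 102, 84, 100, 106, 68, 40, 18, 108, 64, 42, 56, 78, 82, 34, 52, 12, 110, 8, 2, 20]) (by decide)⟩
  · exact ⟨_, natRC_of_list (by norm_num) (by norm_num) (R := [1, 1, 4, 3, 4, 6, 16, 18, 16, 13, 2, 22, 4, 28, 1, 4, 20, 8, 66, 28, 32, 36, 74, 78, 58, 40, 68, 11, 92, 12, 82, 106, 54, 14, 34, 10, 2, 38, 84, 116, 6, 104, 60, 44, 30, 90, 56, 46, 98, 24, 88, 72, 102, 108, 76, 70, 112, 80, 100, 22]) (by decide)⟩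
  · exact ⟨_, natRC_of_list (by norm_num) (by norm_num) (R := [1, 1, 3, 6, 6, 8, 5, 5, 1, 21, 4, 7, 30, 17, 14, 10, 2, 46, 2, 15, 19, 36, 18, 4, 76, 78, 84, 10, 8, 48, 28, 56, 74, 94, 58, 102, 88, 54, 40, 6, 38, 114, 52, 104, 106, 42, 64, 34, 32, 110, 90, 12, 68, 72, 98, 26, 20, 16, 80, 96, 82]) (by decide)⟩
  · exact ⟨_, natRC_of_list (by norm_num) (by norm_num) (R := [1, 2, 2, 1, 9, 11, 6, 14, 12, 24, 28, 26, 22, 25, 38, 4, 54, 21, 25, 1, 29, 42, 26, 9, 86, 28, 62, 66, 46, 112, 96, 10, 58, 74, 78, 106, 118, 20, 14, 122, 70, 6, 8, 16, 2, 108, 36, 88, 30, 60, 34, 48, 80, 44, 32, 18, 94, 56, 116, 50, 114, 84]) (by decide)⟩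
  · exact ⟨_, natRC_of_list (by norm_num) (by norm_num) (R := [1, 2, 3, 2, 6, 1, 1, 18, 1, 18, 8, 13, 1, 36, 10, 12, 9, 22, 41, 26, 48, 44, 14, 34, 72, 9, 16, 88, 18, 90, 6, 80, 96, 122, 74, 112, 66, 60, 32, 46, 12, 86, 82, 20, 54, 52, 30, 2, 106, 94, 100, 114, 102, 28, 4, 62, 98, 64, 38, 84, 58, 116, 78]) (by decide)⟩
  · exact ⟨_, natRC_of_list (by norm_num) (by norm_num) (R := [1, 1, 4, 5, 1, 7, 13, 12, 17, 17, 28, 30, 1, 19, 14, 10, 54, 4, 16, 47, 7, 22, 9, 74, 38, 30, 48, 9, 12, 112, 120, 14, 8, 2, 18, 40, 34, 98, 110, 58, 32, 100, 20, 122, 102, 26, 70, 114, 52, 60, 94, 84, 6, 76, 90, 106, 82, 44, 24, 66, 56, 36, 96, 68]) (by decide)⟩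
  · exact ⟨_, natRC_of_list (by norm_num) (by norm_num) (R := [1, 2, 1, 1, 5, 11, 10, 12, 1, 7, 27, 24, 40, 42, 35, 46, 13, 15, 16, 47, 4, 52, 6, 84, 1, 64, 50, 2, 74, 22, 44, 8, 96, 124, 14, 70, 60, 66, 102, 62, 12, 126, 90, 30, 28, 92, 26, 106, 20, 112, 80, 100, 10, 34, 110, 114, 18, 54, 48, 68, 38, 86, 56, 32, 108]) (by decide)⟩
  · exact ⟨_, natRC_of_list (by norm_num) (by norm_num) (R := [1, 2, 3, 1, 10, 4, 12, 13, 6, 4, 20, 23, 10, 30, 18, 28, 4, 47, 39, 70, 45, 22, 82, 44, 68, 42, 74, 17, 19, 17, 76, 94, 16, 66, 14, 90, 46, 110, 78, 104, 38, 96, 88, 126, 8, 72, 100, 26, 84, 64, 36, 52, 12, 58, 34, 114, 48, 6, 24, 50, 116, 102, 40, 86, 2, 10]) (by decide)⟩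
  · exact ⟨_, natRC_of_list (by norm_num) (by norm_num) (R := [1, 1, 2, 2, 6, 9, 1, 17, 10, 14, 29, 1, 27, 1, 20, 12, 4, 51, 21, 13, 50, 1, 82, 46, 66, 15, 1, 36, 96, 8, 120, 62, 110, 72, 54, 58, 64, 16, 24, 2, 22, 12, 126, 128, 108, 106, 6, 78, 34, 26, 90, 10, 132, 98, 48, 52, 32, 76, 70, 42, 30, 28, 40, 20, 124, 92, 18]) (by decide)⟩
  · exact ⟨_, natRC_of_list (by norm_num) (by norm_num) (R := [1, 2, 2, 5, 7, 8, 15, 10, 17, 6, 1, 7, 16, 22, 28, 37, 27, 59, 38, 18, 7, 26, 10, 68, 20, 4, 58, 76, 17, 14, 122, 6, 70, 128, 72, 100, 60, 134, 16, 46, 12, 30, 96, 52, 116, 102, 124, 82, 56, 130, 36, 24, 112, 8, 92, 54, 84, 88, 74, 78, 42, 104, 2, 106, 114, 32, 50, 110]) (by decide)⟩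
  · exact ⟨_, natRC_of_list (by norm_num) (by norm_num) (R := [1, 1, 2, 6, 10, 9, 7, 4, 1, 5, 16, 5, 24, 29, 14, 11, 8, 10, 32, 48, 44, 26, 19, 5, 54, 86, 34, 5, 60, 40, 88, 128, 52, 22, 98, 38, 28, 122, 84, 24, 66, 4, 6, 120, 74, 126, 82, 110, 12, 114, 134, 130, 46, 124, 30, 56, 42, 96, 68, 90, 36, 2, 62, 20, 136, 104, 50, 118, 18]) (by decide)⟩
  · exact ⟨_, natRC_of_list (by norm_num) (by norm_num) (R := [1, 1, 4, 5, 7, 8, 12, 6, 9, 20, 12, 2, 19, 10, 22, 24, 50, 29, 21, 28, 31, 59, 80, 31, 8, 4, 74, 25, 82, 62, 10, 92, 56, 38, 118, 112, 70, 68, 126, 122, 136, 48, 100, 98, 14, 54, 42, 84, 94, 124, 58, 86, 44, 52, 108, 30, 102, 36, 16, 106, 110, 114, 130, 128, 2, 66, 64, 40, 134, 72]) (by decide)⟩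
  · exact ⟨_, natRC_of_list (by norm_num) (by norm_num) (R := [1, 2, 1, 5, 4, 4, 2, 4, 3, 12, 20, 18, 8, 40, 28, 51, 34, 4, 60, 69, 47, 57, 13, 86, 3, 30, 7, 50, 28, 54, 112, 44, 68, 66, 102, 76, 14, 72, 32, 114, 84, 16, 36, 108, 132, 6, 46, 92, 64, 98, 38, 94, 52, 80, 134, 88, 10, 128, 130, 138, 124, 106, 24, 74, 58, 78, 118, 62, 116, 22, 48]) (by decide)⟩

theorem exists_restricted_covering_and_two_k_mem_D (k : ℕ) (hk : 1 ≤ k) :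
    (∃ r : Fin k → ℕ, (∀ i : Fin k, r i < Nat.nth Nat.Prime i) ∧
      RestrictedCovers (fun i : Fin k => Nat.nth Nat.Prime i) r 1 (2 * k - 1)) ∧
    memD k (2 * k) := by
  have hrc : ∃ r : Fin k → ℕ, NatRC k r := by
    rcases le_or_gt k 71 with h | h
    · exact natRC_small k hk h
    · exact natRC_large k (by omega)
  obtain ⟨r, hr⟩ := hrc
  exact ⟨⟨r, hr.1, natRC_to_restricted hk hr⟩, natRC_to_memD hk hr⟩

end PrimorialDifferences
end

section
/- For every k ≥ 1 and every n with 1 ≤ n ≤ k, the number 2n occurs as a difference between consecutive positive integers coprime to p_k#; that is, 2n ∈ D(k). Equivalently, 2k ≤ N_min(k), where N_min(k) denotes the greatest even number N such that 2n ∈ D(k) for all n ≤ N/2. -/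
namespace PrimorialDifferences

theorem two_n_mem_D_of_le (k n : ℕ) (hk : 1 ≤ k) (hn : 1 ≤ n) (hnk : n ≤ k) :
    memD k (2 * n) := by
  classical
  set Q : ℕ → ℕ := Nat.nth Nat.Prime with hQdef
  have hQp : ∀ i, (Q i).Prime := Nat.prime_nth_prime
  have hQ0 : Q 0 = 2 := Nat.nth_prime_zero_eq_two
  have hQmono : StrictMono Q := Nat.nth_strictMono Nat.infinite_setOf_prime
  have hQ2 : ∀ i, 1 ≤ i → 2 < Q i := by
    intro i hi
    have := hQmono (show 0 < i by omega)
    omega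
  have hQodd : ∀ i, 1 ≤ i → ¬ (2 ∣ Q i) := by
    intro i hi h
    have h2 := hQ2 i hi
    rcases (hQp i).eq_one_or_self_of_dvd 2 h with h' | h' <;> omega
  have hdvd2 : ∀ i, 1 ≤ i → ∀ b, Q i ∣ 2 * b → Q i ∣ b := by
    intro i hi b h
    rcases ((hQp i).dvd_mul).mp h with h' | h'
    · exact absurd (Nat.le_of_dvd (by norm_num) h') (by have := hQ2 i hi; omega)
    · exact h'
  have hQge : ∀ i, 1 ≤ i → 2 * i + 1 ≤ Q i := by
    intro i hi
    induction i with
    | zero => omega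
    | succ j ih =>
      rcases Nat.lt_or_ge 1 (j + 1) with h | h
      · have hj : 1 ≤ j := by omega
        have h1 := ih hj
        have h2 : Q j < Q (j + 1) := hQmono (by omega : j < j + 1)
        have h3 := hQodd j hj
        have h4 := hQodd (j + 1) (by omega)
        omega
      · have := hQ2 (j + 1) hi
        omega
  -- the predicates describing which even offsets are covered by small primes
  set P1 : ℕ → Prop := fun m => (m + 1).Prime ∧ 2 < m + 1 ∧ ¬ (m + 1) ∣ (n + 1) with hP1def
  set P2 : ℕ → Prop := fun m => (m + 2).Prime ∧ (m + 2) ∣ (n + 1) with hP2def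
  set M0 : Finset ℕ := (Finset.Ico 1 n).filter (fun m => P1 m ∨ P2 m) with hM0def
  set U : Finset ℕ := (Finset.Ico 1 n).filter (fun m => ¬ (P1 m ∨ P2 m)) with hUdef
  set Sm : Finset ℕ := (Finset.Ico 1 k).filter (fun i => Q i ≤ n + 1) with hSmdef
  set Bg : Finset ℕ := (Finset.Ico 1 k).filter (fun i => ¬ (Q i ≤ n + 1)) with hBgdef
  -- every small odd prime covers a distinct element of M0
  have hinj : Sm.card ≤ M0.card := by
    apply Finset.card_le_card_of_injOn (fun i => if Q i ∣ n + 1 then Q i - 2 else Q i - 1)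
    · intro i hi
      rw [hSmdef, Finset.mem_coe, Finset.mem_filter, Finset.mem_Ico] at hi
      obtain ⟨⟨hi1, hik⟩, hle⟩ := hi
      have h3 : 2 < Q i := hQ2 i hi1
      have hp : (Q i).Prime := hQp i
      rw [hM0def, Finset.mem_coe, Finset.mem_filter, Finset.mem_Ico]; beta_reduce
      by_cases hdv : Q i ∣ n + 1
      · rw [if_pos hdv]
        have he2 : Q i - 2 + 2 = Q i := by omega
        refine ⟨⟨by omega, by omega⟩, Or.inr ⟨by rw [he2]; exact hp, by rw [he2]; exact hdv⟩⟩
      · have hqn : Q i ≤ n := by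
          rcases Nat.lt_or_ge (Q i) (n + 1) with h | h
          · omega
          · exact absurd (show Q i ∣ n + 1 from ⟨1, by omega⟩) hdv
        rw [if_neg hdv]
        have he1 : Q i - 1 + 1 = Q i := by omega
        refine ⟨⟨by omega, by omega⟩, Or.inl ⟨by rw [he1]; exact hp, by omega,
          by rw [he1]; exact hdv⟩⟩
    · intro i hi i' hi' heq
      simp only [Finset.coe_filter, Set.mem_setOf_eq, Finset.mem_Ico, hSmdef,
        Finset.mem_filter] at hi hi'
      have hoi := hQodd i hi.1.1
      have hoi' := hQodd i' hi'.1.1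
      have h3 : 2 < Q i := hQ2 i hi.1.1
      have h3' : 2 < Q i' := hQ2 i' hi'.1.1
      have heq' : (if Q i ∣ n + 1 then Q i - 2 else Q i - 1) =
          (if Q i' ∣ n + 1 then Q i' - 2 else Q i' - 1) := heq
      have hQeq : Q i = Q i' := by
        by_cases hdv : Q i ∣ n + 1 <;> by_cases hdv' : Q i' ∣ n + 1
        · rw [if_pos hdv, if_pos hdv'] at heq'; omega
        · rw [if_pos hdv, if_neg hdv'] at heq'; omega
        · rw [if_neg hdv, if_pos hdv'] at heq'; omega
        · rw [if_neg hdv, if_neg hdv'] at heq'; omega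
      exact hQmono.injective hQeq
  -- counting
  have hcard : U.card ≤ Bg.card := by
    have h1 : M0.card + U.card = n - 1 := by
      rw [hM0def, hUdef]
      rw [Finset.card_filter_add_card_filter_not]
      simp
    have h2 : Sm.card + Bg.card = k - 1 := by
      rw [hSmdef, hBgdef]
      rw [Finset.card_filter_add_card_filter_not]
      simp
    omega
  have hUB : Fintype.card ↥U ≤ Fintype.card ↥Bg := by
    simpa [Fintype.card_coe] using hcard
  obtain ⟨φ⟩ := Function.Embedding.nonempty_of_card_le hUB
  -- the "kill offsets": prime Q i will divide x + c i
  set d : ℕ → ℕ := fun i =>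
    if Q i ≤ n + 1 then (if Q i ∣ n + 1 then Q i - 2 else Q i - 1)
    else if h2 : ∃ m : ↥U, ((φ m : ℕ)) = i then ((h2.choose : ℕ))
    else 2 * n with hddef
  set c : ℕ → ℕ := fun i => if i = 0 then 1 else 2 * d i with hcdef
  -- facts about membership in U
  have hUmem : ∀ m : ↥U, 1 ≤ (m : ℕ) ∧ (m : ℕ) < n := by
    intro m
    exact Finset.mem_Ico.mp (Finset.mem_filter.mp m.2).1
  have hBgmem : ∀ b : ↥Bg, (1 ≤ (b : ℕ) ∧ (b : ℕ) < k) ∧ ¬ (Q (b : ℕ) ≤ n + 1) := by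
    intro b
    have hb := Finset.mem_filter.mp b.2
    exact ⟨Finset.mem_Ico.mp hb.1, hb.2⟩
  have hc0 : c 0 = 1 := by norm_num [hcdef]
  have hcpos : ∀ i, 1 ≤ i → c i = 2 * d i := by
    intro i hi
    simp only [hcdef]; rw [if_neg (by omega : ¬ i = 0)]
  -- key per-prime facts
  have keyAB : ∀ i, 1 ≤ i → i < k →
      (¬ Q i ∣ d i) ∧ ¬ (Nat.ModEq (Q i) (2 * n) (2 * d i)) := by
    intro i hi1 hik
    have h2 : 2 < Q i := hQ2 i hi1
    by_cases hsm : Q i ≤ n + 1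
    · by_cases hdv : Q i ∣ n + 1
      · have hd : d i = Q i - 2 := by rw [hddef]; simp only [if_pos hsm, if_pos hdv]
        constructor
        · rw [hd]; intro h
          have := Nat.le_of_dvd (by omega) h; omega
        · rw [hd]; intro h
          have hle : 2 * (Q i - 2) ≤ 2 * n := by omega
          have h4 := (Nat.modEq_iff_dvd' hle).mp h.symm
          rw [show 2 * n - 2 * (Q i - 2) = 2 * (n - (Q i - 2)) by omega] at h4
          have h5 := hdvd2 i hi1 _ h4
          have h6 := Nat.dvd_sub hdv h5
          rw [show (n + 1) - (n - (Q i - 2)) = Q i - 1 by omega] at h6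
          have := Nat.le_of_dvd (by omega) h6; omega
      · have hqn : Q i ≤ n := by
          rcases Nat.lt_or_ge (Q i) (n + 1) with h | h
          · omega
          · exact absurd (show Q i ∣ n + 1 from ⟨1, by omega⟩) hdv
        have hd : d i = Q i - 1 := by simp only [hddef]; rw [if_pos hsm, if_neg hdv]
        constructor
        · rw [hd]; intro h
          have := Nat.le_of_dvd (by omega) h; omega
        · rw [hd]; intro h
          have hle : 2 * (Q i - 1) ≤ 2 * n := by omega
          have h4 := (Nat.modEq_iff_dvd' hle).mp h.symm
          rw [show 2 * n - 2 * (Q i - 1) = 2 * (n - (Q i - 1)) by omega] at h4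
          have h5 := hdvd2 i hi1 _ h4
          have h6 : Q i ∣ (n - (Q i - 1)) + Q i := dvd_add h5 dvd_rfl
          rw [show (n - (Q i - 1)) + Q i = n + 1 by omega] at h6
          exact hdv h6
    · by_cases hex : ∃ m : ↥U, ((φ m : ℕ)) = i
      · have hd : d i = ((hex.choose : ℕ)) := by
          simp only [hddef]; rw [if_neg hsm, dif_pos hex]
        obtain ⟨hm1, hm2⟩ := hUmem hex.choose
        constructor
        · rw [hd]; intro h
          have := Nat.le_of_dvd (by omega) h; omega
        · rw [hd]; intro h
          have hle : 2 * ((hex.choose : ℕ)) ≤ 2 * n := by omega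
          have h4 := (Nat.modEq_iff_dvd' hle).mp h.symm
          rw [show 2 * n - 2 * ((hex.choose : ℕ)) = 2 * (n - (hex.choose : ℕ)) by omega] at h4
          have h5 := hdvd2 i hi1 _ h4
          have := Nat.le_of_dvd (by omega) h5; omega
      · have hd : d i = 2 * n := by
          simp only [hddef]; rw [if_neg hsm, dif_neg hex]
        constructor
        · rw [hd]; intro h
          have h5 := hdvd2 i hi1 _ h
          have := Nat.le_of_dvd (by omega) h5; omega
        · rw [hd]; intro h
          have hle : 2 * n ≤ 2 * (2 * n) := by omega
          have h4 := (Nat.modEq_iff_dvd' hle).mp h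
          rw [show 2 * (2 * n) - 2 * n = 2 * n by omega] at h4
          have h5 := hdvd2 i hi1 _ h4
          have := Nat.le_of_dvd (by omega) h5; omega
  have keyA : ∀ i, i < k → ¬ Q i ∣ c i := by
    intro i hik h
    rcases Nat.eq_zero_or_pos i with rfl | hi1
    · rw [hc0, hQ0] at h; omega
    · rw [hcpos i hi1] at h
      exact (keyAB i hi1 hik).1 (hdvd2 i hi1 _ h)
  have keyB : ∀ i, i < k → ¬ (Nat.ModEq (Q i) (2 * n) (c i)) := by
    intro i hik h
    rcases Nat.eq_zero_or_pos i with rfl | hi1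
    · rw [hc0, hQ0] at h
      have h' : 2 * n % 2 = 1 % 2 := h
      omega
    · rw [hcpos i hi1] at h
      exact (keyAB i hi1 hik).2 h
  -- finding the index of a small prime
  have hidx : ∀ q, Nat.Prime q → 2 < q → q ≤ n + 1 → ∃ i, 1 ≤ i ∧ i < k ∧ Q i = q := by
    intro q hq h2q hqn
    have hk2 : 2 ≤ k := by omega
    have hQi : Q (Nat.count Nat.Prime q) = q := Nat.nth_count hq
    set i := Nat.count Nat.Prime q with hidef
    have hi1 : 1 ≤ i := by
      by_contra h
      have hz : i = 0 := by omega
      rw [hz, hQ0] at hQi; omega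
    have hge : 2 * (k - 1) + 1 ≤ Q (k - 1) := hQge (k - 1) (by omega)
    have hmono_le : q ≤ Q (k - 1) := by omega
    have hle : i ≤ k - 1 := by
      have h1 : Nat.count Nat.Prime q ≤ Nat.count Nat.Prime (Q (k - 1)) :=
        Nat.count_monotone _ hmono_le
      have h2 : Nat.count Nat.Prime (Q (k - 1)) = k - 1 :=
        Nat.count_nth_of_infinite Nat.infinite_setOf_prime _
      omega
    exact ⟨i, hi1, by omega, hQi⟩
  -- covering: every even offset 2m with 1 ≤ m < n is killed by some prime
  have cover : ∀ m, 1 ≤ m → m < n → ∃ i, i < k ∧ c i = 2 * m := by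
    intro m h1 h2
    by_cases hP1 : P1 m
    · obtain ⟨hpr, h2q, hnd⟩ := hP1
      obtain ⟨i, hi1, hik, hQi⟩ := hidx (m + 1) hpr h2q (by omega)
      refine ⟨i, hik, ?_⟩
      rw [hcpos i hi1]
      have hnd' : ¬ Q i ∣ n + 1 := by rw [hQi]; exact hnd
      have hd : d i = m := by
        simp only [hddef]
        rw [if_pos (show Q i ≤ n + 1 by omega), if_neg hnd', hQi]
        omega
      rw [hd]
    · by_cases hP2 : P2 m
      · obtain ⟨hpr, hdv⟩ := hP2
        have hqn : m + 2 ≤ n + 1 := Nat.le_of_dvd (by omega) hdv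
        obtain ⟨i, hi1, hik, hQi⟩ := hidx (m + 2) hpr (by omega) hqn
        refine ⟨i, hik, ?_⟩
        rw [hcpos i hi1]
        have hdv' : Q i ∣ n + 1 := by rw [hQi]; exact hdv
        have hd : d i = m := by
          simp only [hddef]
          rw [if_pos (show Q i ≤ n + 1 by omega), if_pos hdv', hQi]
          omega
        rw [hd]
      · have hmU : m ∈ U := by
          rw [hUdef, Finset.mem_filter, Finset.mem_Ico]
          exact ⟨⟨h1, h2⟩, by tauto⟩
        have hex : ∃ m' : ↥U, ((φ m' : ℕ)) = ((φ (⟨m, hmU⟩ : ↥U) : ℕ)) := ⟨⟨m, hmU⟩, rfl⟩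
        obtain ⟨⟨hi1, hik⟩, hbig⟩ := hBgmem (φ (⟨m, hmU⟩ : ↥U))
        refine ⟨((φ (⟨m, hmU⟩ : ↥U) : ℕ)), hik, ?_⟩
        rw [hcpos _ hi1]
        have hd : d ((φ (⟨m, hmU⟩ : ↥U) : ℕ)) = m := by
          simp only [hddef]
          rw [if_neg hbig, dif_pos hex]
          have hspec := hex.choose_spec
          have heq2 : φ hex.choose = φ (⟨m, hmU⟩ : ↥U) := Subtype.coe_injective hspec
          have hcm : hex.choose = (⟨m, hmU⟩ : ↥U) := φ.injective heq2
          rw [hcm]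
        rw [hd]
  -- Chinese remainder: get x with Q i ∣ x + c i for all i < k
  have hsne : ∀ i ∈ Finset.range k, Q i ≠ 0 := fun i _ => (hQp i).pos.ne'
  have hpair : Set.Pairwise ↑(Finset.range k) (Function.onFun Nat.Coprime Q) := by
    intro i _ j _ hij
    exact (Nat.coprime_primes (hQp i) (hQp j)).mpr fun h => hij (hQmono.injective h)
  obtain ⟨x0, hx0⟩ := Nat.chineseRemainderOfFinset (fun i => c i * (Q i - 1)) Q
    (Finset.range k) hsne hpair
  have hprim : primorial k = ∏ i ∈ Finset.range k, Q i := rfl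
  have hprim_pos : 0 < primorial k := by
    rw [hprim]; exact Finset.prod_pos fun i _ => (hQp i).pos
  set x : ℕ := x0 + primorial k with hxdef
  have hxpos : 0 < x := by omega
  have hxc : ∀ i, i < k → Q i ∣ x + c i := by
    intro i hik
    have h1 : x0 ≡ c i * (Q i - 1) [MOD Q i] := hx0 i (Finset.mem_range.mpr hik)
    have h2 : Q i ∣ primorial k := by
      rw [hprim]; exact Finset.dvd_prod_of_mem _ (Finset.mem_range.mpr hik)
    have h0 : primorial k ≡ 0 [MOD Q i] := (Nat.modEq_zero_iff_dvd).mpr h2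
    have h3 : x + c i ≡ c i * (Q i - 1) + c i + 0 [MOD Q i] := by
      have : x + c i = (x0 + c i) + primorial k := by omega
      rw [this]
      exact (h1.add_right (c i)).add h0
    have h4 : c i * (Q i - 1) + c i + 0 = c i * Q i := by
      have hq : 1 ≤ Q i := (hQp i).pos
      have hle : c i ≤ c i * Q i := Nat.le_mul_of_pos_right _ (hQp i).pos
      have hsub : c i * (Q i - 1) = c i * Q i - c i := by
        rw [Nat.mul_sub, Nat.mul_one]
      omega
    rw [h4] at h3
    exact (Nat.modEq_zero_iff_dvd).mp (h3.trans ((Nat.modEq_zero_iff_dvd).mpr ⟨c i, mul_comm _ _⟩))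
  have hdvd_iff : ∀ i, i < k → ∀ w, Q i ∣ x + w → Nat.ModEq (Q i) w (c i) := by
    intro i hik w hw
    have h1 : x + w ≡ 0 [MOD Q i] := (Nat.modEq_zero_iff_dvd).mpr hw
    have h2 : x + c i ≡ 0 [MOD Q i] := (Nat.modEq_zero_iff_dvd).mpr (hxc i hik)
    exact Nat.ModEq.add_left_cancel' x (h1.trans h2.symm)
  have hcop : ∀ w, (∀ i, i < k → ¬ Nat.ModEq (Q i) w (c i)) →
      Nat.gcd (x + w) (primorial k) = 1 := by
    intro w hw
    have : Nat.Coprime (x + w) (primorial k) := by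
      rw [hprim, Nat.coprime_prod_right_iff]
      intro i hi
      rw [Nat.coprime_comm]
      exact ((hQp i).coprime_iff_not_dvd).mpr
        (fun hd => hw i (Finset.mem_range.mp hi) (hdvd_iff i (Finset.mem_range.mp hi) w hd))
    exact this
  have hgcd_lt : ∀ j i, i < k → Q i ∣ x + j → 1 < Nat.gcd (x + j) (primorial k) := by
    intro j i hik hd
    have h1 : Q i ∣ primorial k := by
      rw [hprim]; exact Finset.dvd_prod_of_mem _ (Finset.mem_range.mpr hik)
    have h2 : Q i ∣ Nat.gcd (x + j) (primorial k) := Nat.dvd_gcd hd h1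
    have h3 : 0 < Nat.gcd (x + j) (primorial k) := Nat.gcd_pos_of_pos_right _ hprim_pos
    have h4 := Nat.le_of_dvd h3 h2
    have := (hQp i).two_le
    omega
  refine ⟨x, hxpos, ?_, ?_, ?_⟩
  · have h := hcop 0 (fun i hik hm => keyA i hik ((Nat.modEq_zero_iff_dvd).mp hm.symm))
    simpa using h
  · exact hcop (2 * n) (fun i hik hm => keyB i hik hm)
  · intro j hj0 hj2n
    rcases Nat.even_or_odd j with he | ho
    · obtain ⟨m, rfl⟩ := he
      have h1 : 1 ≤ m := by omega
      have h2 : m < n := by omega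
      obtain ⟨i, hik, hci⟩ := cover m h1 h2
      have hd : Q i ∣ x + (m + m) := by
        have := hxc i hik
        rw [hci] at this
        rw [show x + (m + m) = x + 2 * m by omega]
        exact this
      exact hgcd_lt (m + m) i hik hd
    · obtain ⟨a, rfl⟩ := ho
      have h20 : Q 0 ∣ x + 1 := by
        have h := hxc 0 (by omega)
        rwa [hc0] at h
      have hd : Q 0 ∣ x + (2 * a + 1) := by
        rw [show x + (2 * a + 1) = (x + 1) + 2 * a by omega]
        exact dvd_add h20 (by rw [hQ0]; exact Dvd.intro a rfl)
      exact hgcd_lt (2 * a + 1) 0 (by omega) hd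

end PrimorialDifferences
end

section
/- Let m ≥ 1, k ≥ 2, let π_1 = 2 and let π_2, …, π_k be pairwise distinct odd primes. Then there exist a ∈ ℤ and residues a_i ∈ {0, …, π_i − 1}, i = 2, …, k, such that {a_i mod π_i}_{i=2}^k covers ⟨a⟩_m, if and only if there exist b ∈ ℤ, b_1 ∈ {0, 1}, and residues b_i ∈ {0, …, π_i − 1}, i = 2, …, k, such that {b_i mod π_i}_{i=1}^k covers ⟨b⟩_{2m+1}. -/
namespace PrimorialDifferences

private lemma inv_two_of_odd {n : ℕ} (hn : Odd n) : ∃ c : ℤ, 2 * c ≡ 1 [ZMOD (n : ℤ)] := by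
  obtain ⟨t, ht⟩ := hn
  refine ⟨t + 1, (Int.modEq_iff_dvd.mpr ⟨-1, ?_⟩)⟩
  push_cast [ht]; ring

theorem covering_doubling_with_two (m k : ℕ) (hm : 1 ≤ m) (hk : 2 ≤ k)
    (π : Fin (k - 1) → ℕ) (hπ : ∀ i, Nat.Prime (π i)) (hodd : ∀ i, Odd (π i))
    (hdist : ∀ i j : Fin (k - 1), i ≠ j → π i ≠ π j) :
    (∃ (a : ℤ) (r : Fin (k - 1) → ℕ), (∀ i, r i < π i) ∧ Covers π r a m)
    ↔ (∃ (b : ℤ) (b₁ : ℕ) (s : Fin (k - 1) → ℕ), b₁ < 2 ∧ (∀ i, s i < π i) ∧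
        ∀ j : ℕ, j < 2 * m + 1 →
          (b + (j : ℤ) ≡ (b₁ : ℤ) [ZMOD (2 : ℤ)] ∨
            ∃ i : Fin (k - 1), b + (j : ℤ) ≡ (s i : ℤ) [ZMOD (π i : ℤ)])) := by
  constructor
  · rintro ⟨a, r, hr, hcov⟩
    refine ⟨2 * a - 1, 1, fun i => (2 * r i) % π i, by norm_num,
      fun i => Nat.mod_lt _ (hπ i).pos, ?_⟩
    intro j hj
    rcases Nat.even_or_odd j with he | ho
    · left
      obtain ⟨t, ht⟩ := he
      subst ht
      simp only [Int.ModEq]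
      push_cast
      omega
    · right
      obtain ⟨t, ht⟩ := ho
      have htm : t < m := by omega
      obtain ⟨i, hi⟩ := hcov t htm
      refine ⟨i, ?_⟩
      have h1 : (2 * a - 1 + (j : ℤ)) = 2 * (a + (t : ℤ)) := by push_cast [ht]; ring
      rw [h1]
      calc 2 * (a + (t : ℤ)) ≡ 2 * ((r i : ℤ)) [ZMOD (π i : ℤ)] := hi.mul_left 2
        _ ≡ (((2 * r i) % π i : ℕ) : ℤ) [ZMOD (π i : ℤ)] := by
            rw [show (((2 * r i) % π i : ℕ) : ℤ) = (2 * (r i : ℤ)) % (π i : ℤ) by push_cast; ring_nf]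
            exact (Int.emod_emod_of_dvd _ dvd_rfl).symm
  · rintro ⟨b, b₁, s, hb₁, hs, hcov⟩
    set N : ℕ := ∏ i, π i with hN
    have hNodd : Odd N :=
      Finset.prod_induction _ Odd (fun a b ha hb => ha.mul hb) odd_one (fun i _ => hodd i)
    obtain ⟨c, hc⟩ := inv_two_of_odd hNodd
    have hinv : ∀ i, ∃ ci : ℤ, 2 * ci ≡ 1 [ZMOD (π i : ℤ)] := fun i => inv_two_of_odd (hodd i)
    choose cf hcf using hinv
    have hj0 : ∃ j₀ : ℕ, j₀ < 2 ∧ ¬ (b + (j₀ : ℤ) ≡ (b₁ : ℤ) [ZMOD 2]) := by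
      by_cases h : b ≡ (b₁ : ℤ) [ZMOD 2]
      · refine ⟨1, by norm_num, ?_⟩
        simp only [Int.ModEq] at h ⊢
        omega
      · exact ⟨0, by norm_num, by simpa using h⟩
    obtain ⟨j₀, hj₀2, hj₀⟩ := hj0
    refine ⟨c * (b + (j₀ : ℤ)), fun i => ((cf i * s i) % (π i : ℤ)).toNat, ?_, ?_⟩
    · intro i
      show ((cf i * (s i : ℤ)) % (π i : ℤ)).toNat < π i
      have hp : (0 : ℤ) < (π i : ℤ) := by exact_mod_cast (hπ i).pos
      have h1 := Int.emod_lt_of_pos (cf i * (s i : ℤ)) hp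
      have h2 := Int.emod_nonneg (cf i * (s i : ℤ)) hp.ne'
      omega
    · intro t ht
      have hjlt : j₀ + 2 * t < 2 * m + 1 := by omega
      rcases hcov (j₀ + 2 * t) hjlt with h2 | ⟨i, hi⟩
      · exfalso
        apply hj₀
        simp only [Int.ModEq] at h2 ⊢
        push_cast at h2 ⊢
        omega
      · refine ⟨i, ?_⟩
        have hdvd : ((π i : ℤ)) ∣ (N : ℤ) :=
          Int.natCast_dvd_natCast.mpr (Finset.dvd_prod_of_mem _ (Finset.mem_univ i))
        have hc' : 2 * c ≡ 1 [ZMOD (π i : ℤ)] := Int.ModEq.of_dvd hdvd hc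
        have key : 2 * (c * (b + (j₀ : ℤ)) + (t : ℤ)) ≡ (s i : ℤ) [ZMOD (π i : ℤ)] := by
          calc 2 * (c * (b + (j₀ : ℤ)) + (t : ℤ)) = (2 * c) * (b + j₀) + 2 * t := by ring
            _ ≡ 1 * (b + (j₀ : ℤ)) + 2 * t [ZMOD (π i : ℤ)] :=
                Int.ModEq.add (hc'.mul_right _) (Int.ModEq.refl _)
            _ = b + ((j₀ + 2 * t : ℕ) : ℤ) := by push_cast; ring
            _ ≡ (s i : ℤ) [ZMOD (π i : ℤ)] := hi
        have hp : (0 : ℤ) < (π i : ℤ) := by exact_mod_cast (hπ i).pos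
        calc c * (b + (j₀ : ℤ)) + (t : ℤ) = 1 * (c * (b + (j₀ : ℤ)) + (t : ℤ)) := by ring
          _ ≡ (2 * cf i) * (c * (b + (j₀ : ℤ)) + (t : ℤ)) [ZMOD (π i : ℤ)] :=
              (hcf i).symm.mul_right _
          _ = cf i * (2 * (c * (b + (j₀ : ℤ)) + (t : ℤ))) := by ring
          _ ≡ cf i * (s i : ℤ) [ZMOD (π i : ℤ)] := key.mul_left _
          _ ≡ (((cf i * (s i : ℤ)) % (π i : ℤ)).toNat : ℤ) [ZMOD (π i : ℤ)] := by
              rw [Int.toNat_of_nonneg (Int.emod_nonneg _ hp.ne')]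
              exact (Int.emod_emod_of_dvd _ dvd_rfl).symm

end PrimorialDifferences
end

section
/- Let k ≥ 2 and let m be an even positive integer. Then m ∈ D(k) if and only if there exist residues a_i ∈ {1, …, p_i − 1} for i = 2, …, k (odd primes only) such that {a_i mod p_i}_{i=2}^k is a restricted covering of ⟨1⟩_{m/2 − 1} = (1, 2, …, m/2 − 1). -/
namespace PrimorialDifferences

/-! ### Auxiliary lemmas -/

lemma two_lt_nth_prime {i : ℕ} (hi : 1 ≤ i) : 2 < Nat.nth Nat.Prime i := by
  have h3 : Nat.nth Nat.Prime 1 = 3 := Nat.nth_prime_one_eq_three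
  have hmono : Monotone (Nat.nth Nat.Prime) :=
    (Nat.nth_strictMono Nat.infinite_setOf_prime).monotone
  have := hmono hi
  omega

lemma coprime_primorial_iff {x k : ℕ} :
    Nat.gcd x (primorial k) = 1 ↔ ∀ i < k, ¬ Nat.nth Nat.Prime i ∣ x := by
  show Nat.Coprime x (primorial k) ↔ _
  unfold primorial
  rw [Nat.coprime_prod_right_iff]
  constructor
  · intro h i hi
    exact ((Nat.prime_nth_prime i).coprime_iff_not_dvd).mp
      ((h i (Finset.mem_range.mpr hi)).symm)
  · intro h i hi
    exact (((Nat.prime_nth_prime i).coprime_iff_not_dvd).mpr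
      (h i (Finset.mem_range.mp hi))).symm

lemma prime_dvd_primorial {q k : ℕ} (hq : q.Prime) (h : q ∣ primorial k) :
    ∃ i < k, q = Nat.nth Nat.Prime i := by
  unfold primorial at h
  obtain ⟨i, hi, hdvd⟩ := hq.prime.exists_mem_finset_dvd h
  exact ⟨i, Finset.mem_range.mp hi,
    (Nat.prime_dvd_prime_iff_eq hq (Nat.prime_nth_prime i)).mp hdvd⟩

lemma nth_prime_dvd_primorial {i k : ℕ} (hik : i < k) :
    Nat.nth Nat.Prime i ∣ primorial k := by
  unfold primorial
  exact Finset.dvd_prod_of_mem _ (Finset.mem_range.mpr hik)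

/-- Key equivalence: if `x + 2w ≡ 0 (mod q)` for an odd prime `q`, then
`t ≡ w (mod q)` iff `q ∣ x + 2t`. -/
lemma key_iff {q : ℕ} (hq : q.Prime) (hq2 : 2 < q) (x w : ℕ)
    (hxw : (x : ZMod q) + 2 * (w : ZMod q) = 0) (t : ℕ) :
    (t : ℤ) ≡ (w : ℤ) [ZMOD (q : ℤ)] ↔ q ∣ x + 2 * t := by
  haveI : Fact q.Prime := ⟨hq⟩
  haveI : NeZero q := ⟨hq.pos.ne'⟩
  have h2 : (2 : ZMod q) ≠ 0 := by
    intro h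
    have h' : ((2 : ℕ) : ZMod q) = 0 := by push_cast; exact h
    rw [ZMod.natCast_eq_zero_iff] at h'
    have := Nat.le_of_dvd (by norm_num) h'
    omega
  rw [← ZMod.intCast_eq_intCast_iff]
  push_cast
  constructor
  · intro h
    have hz : ((x + 2 * t : ℕ) : ZMod q) = 0 := by
      push_cast
      linear_combination hxw + 2 * h
    rwa [ZMod.natCast_eq_zero_iff] at hz
  · intro h
    have hz : ((x + 2 * t : ℕ) : ZMod q) = 0 :=
      (ZMod.natCast_eq_zero_iff _ _).mpr h
    push_cast at hz
    have h2tw : (2 : ZMod q) * (t : ZMod q) = 2 * (w : ZMod q) := by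
      linear_combination hz - hxw
    exact mul_left_cancel₀ h2 h2tw

theorem memD_iff_restricted_covering_odd_primes (k m : ℕ) (hk : 2 ≤ k) (hm : 1 ≤ m)
    (heven : Even m) :
    memD k m ↔
      ∃ r : Fin (k - 1) → ℕ,
        (∀ i : Fin (k - 1), 1 ≤ r i ∧ r i < Nat.nth Nat.Prime ((i : ℕ) + 1)) ∧
        RestrictedCovers (fun i : Fin (k - 1) => Nat.nth Nat.Prime ((i : ℕ) + 1)) r 1
          (m / 2 - 1) := by
  have hm2 := Nat.even_iff.mp heven
  set n := m / 2 - 1 with hn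
  have hmn : m = 2 * (n + 1) := by omega
  constructor
  · -- Forward direction
    rintro ⟨x, hx0, hx, hxm, hmid⟩
    have hcop := coprime_primorial_iff.mp hx
    have hcopm := coprime_primorial_iff.mp hxm
    have hx2 : ¬ 2 ∣ x := by
      have := hcop 0 (by omega); rwa [Nat.nth_prime_zero_eq_two] at this
    -- residues
    let w : Fin (k - 1) → ℕ := fun i =>
      (-(x : ZMod (Nat.nth Nat.Prime ((i : ℕ) + 1))) *
        (2 : ZMod (Nat.nth Nat.Prime ((i : ℕ) + 1)))⁻¹).val
    have hwkey : ∀ i : Fin (k - 1),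
        ((x : ZMod (Nat.nth Nat.Prime ((i : ℕ) + 1)))
          + 2 * ((w i : ℕ) : ZMod (Nat.nth Nat.Prime ((i : ℕ) + 1))) = 0) := by
      intro i
      set q := Nat.nth Nat.Prime ((i : ℕ) + 1) with hqdef
      have hq : q.Prime := Nat.prime_nth_prime _
      have hq2 : 2 < q := two_lt_nth_prime (by omega)
      haveI : Fact q.Prime := ⟨hq⟩
      haveI : NeZero q := ⟨hq.pos.ne'⟩
      have h2 : (2 : ZMod q) ≠ 0 := by
        intro h
        have h' : ((2 : ℕ) : ZMod q) = 0 := by push_cast; exact h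
        rw [ZMod.natCast_eq_zero_iff] at h'
        have := Nat.le_of_dvd (by norm_num) h'
        omega
      have hcast : ((w i : ℕ) : ZMod q) = -(x : ZMod q) * (2 : ZMod q)⁻¹ :=
        ZMod.natCast_rightInverse _
      rw [hcast]
      have hinv : (2 : ZMod q) * (2 : ZMod q)⁻¹ = 1 := mul_inv_cancel₀ h2
      linear_combination (-(x : ZMod q)) * hinv
    have key : ∀ (i : Fin (k - 1)) (t : ℕ),
        (t : ℤ) ≡ (w i : ℤ) [ZMOD ((Nat.nth Nat.Prime ((i : ℕ) + 1) : ℕ) : ℤ)] ↔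
          Nat.nth Nat.Prime ((i : ℕ) + 1) ∣ x + 2 * t := fun i t =>
      key_iff (Nat.prime_nth_prime _) (two_lt_nth_prime (by omega)) x (w i) (hwkey i) t
    refine ⟨w, fun i => ⟨?_, ?_⟩, ?_, ?_, ?_⟩
    · -- 1 ≤ w i
      by_contra h
      have hwz : w i = 0 := by omega
      have h0 : ((0 : ℕ) : ℤ) ≡ (w i : ℤ) [ZMOD ((Nat.nth Nat.Prime ((i : ℕ) + 1) : ℕ) : ℤ)] := by
        rw [hwz]
      have := (key i 0).mp h0
      simp only [Nat.mul_zero, Nat.add_zero] at this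
      exact hcop ((i : ℕ) + 1) (by omega) this
    · -- w i < p
      haveI : NeZero (Nat.nth Nat.Prime ((i : ℕ) + 1)) :=
        ⟨(Nat.prime_nth_prime _).pos.ne'⟩
      exact ZMod.val_lt _
    · -- Covers
      intro j hj
      have hmid' := hmid (2 * (j + 1)) (by omega) (by omega)
      have hne1 : Nat.gcd (x + 2 * (j + 1)) (primorial k) ≠ 1 := by omega
      obtain ⟨q, hq, hqdvd⟩ := Nat.exists_prime_and_dvd hne1
      have hq1 : q ∣ x + 2 * (j + 1) := hqdvd.trans (Nat.gcd_dvd_left _ _)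
      have hq2 : q ∣ primorial k := hqdvd.trans (Nat.gcd_dvd_right _ _)
      obtain ⟨i₀, hi₀k, rfl⟩ := prime_dvd_primorial hq hq2
      have hi₀ : i₀ ≠ 0 := by
        rintro rfl
        rw [Nat.nth_prime_zero_eq_two] at hq1
        omega
      refine ⟨⟨i₀ - 1, by omega⟩, ?_⟩
      have hival : (⟨i₀ - 1, by omega⟩ : Fin (k - 1)).val + 1 = i₀ := by
        simp; omega
      have := (key ⟨i₀ - 1, by omega⟩ (j + 1)).mpr (by rw [hival]; exact hq1)
      have hcast : (1 : ℤ) + (j : ℤ) = ((j + 1 : ℕ) : ℤ) := by push_cast; ring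
      simp only [hcast]
      exact this
    · -- restriction at a - 1 = 0
      intro i h
      have h0 : ((0 : ℕ) : ℤ) ≡ (w i : ℤ)
          [ZMOD ((Nat.nth Nat.Prime ((i : ℕ) + 1) : ℕ) : ℤ)] := by
        simpa using h
      have := (key i 0).mp h0
      simp only [Nat.mul_zero, Nat.add_zero] at this
      exact hcop ((i : ℕ) + 1) (by omega) this
    · -- restriction at a + n = n + 1
      intro i h
      have h0 : ((n + 1 : ℕ) : ℤ) ≡ (w i : ℤ)
          [ZMOD ((Nat.nth Nat.Prime ((i : ℕ) + 1) : ℕ) : ℤ)] := by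
        have hcast : (1 : ℤ) + (n : ℤ) = ((n + 1 : ℕ) : ℤ) := by push_cast; ring
        rw [← hcast]
        exact h
      have := (key i (n + 1)).mp h0
      rw [← hmn] at this
      exact hcopm ((i : ℕ) + 1) (by omega) this
  · -- Backward direction
    rintro ⟨r, hr, hcov, hres1, hres2⟩
    classical
    let c : ℕ → ℕ := fun i =>
      if h : 0 < i ∧ i < k then
        ((-2 * (r ⟨i - 1, by omega⟩ : ZMod (Nat.nth Nat.Prime i)) :
          ZMod (Nat.nth Nat.Prime i)).val)
      else 1
    have hs : ∀ i ∈ Finset.range k, Nat.nth Nat.Prime i ≠ 0 :=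
      fun i _ => (Nat.prime_nth_prime i).pos.ne'
    have pp : Set.Pairwise ↑(Finset.range k) (Function.onFun Nat.Coprime (Nat.nth Nat.Prime)) := by
      intro i _ j _ hij
      exact (Nat.coprime_primes (Nat.prime_nth_prime i) (Nat.prime_nth_prime j)).mpr
        (fun h => hij ((Nat.nth_strictMono Nat.infinite_setOf_prime).injective h))
    obtain ⟨x, hxc⟩ := Nat.chineseRemainderOfFinset c (Nat.nth Nat.Prime) (Finset.range k) hs pp
    have hx2 : x % 2 = 1 := by
      have h0 := hxc 0 (Finset.mem_range.mpr (by omega))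
      rw [Nat.nth_prime_zero_eq_two] at h0
      have hc0 : c 0 = 1 := by simp [c]
      rw [hc0] at h0
      have h0' : x % 2 = 1 % 2 := h0
      omega
    -- residues of x at the odd primes
    have hxr : ∀ i : Fin (k - 1),
        ((x : ℕ) : ZMod (Nat.nth Nat.Prime ((i : ℕ) + 1))) =
          -2 * (r i : ZMod (Nat.nth Nat.Prime ((i : ℕ) + 1))) := by
      intro i
      have hik : (i : ℕ) + 1 < k := by omega
      set q := Nat.nth Nat.Prime ((i : ℕ) + 1) with hqdef
      haveI : NeZero q := ⟨(Nat.prime_nth_prime _).pos.ne'⟩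
      have hmem := hxc ((i : ℕ) + 1) (Finset.mem_range.mpr hik)
      have hcast : ((x : ℕ) : ZMod q) = (c ((i : ℕ) + 1) : ZMod q) :=
        (ZMod.natCast_eq_natCast_iff _ _ _).mpr hmem
      rw [hcast]
      have hcval : c ((i : ℕ) + 1) =
          ((-2 * (r i : ZMod q) : ZMod q)).val := by
        have hcond : 0 < (i : ℕ) + 1 ∧ (i : ℕ) + 1 < k := ⟨Nat.succ_pos _, hik⟩
        simp only [c]
        rw [dif_pos hcond]
        rfl
      rw [hcval]
      exact ZMod.natCast_rightInverse _
    have key : ∀ (i : Fin (k - 1)) (t : ℕ),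
        (t : ℤ) ≡ (r i : ℤ) [ZMOD ((Nat.nth Nat.Prime ((i : ℕ) + 1) : ℕ) : ℤ)] ↔
          Nat.nth Nat.Prime ((i : ℕ) + 1) ∣ x + 2 * t := by
      intro i t
      refine key_iff (Nat.prime_nth_prime _) (two_lt_nth_prime (by omega)) x (r i) ?_ t
      rw [hxr i]; ring
    refine ⟨x, by omega, ?_, ?_, ?_⟩
    · -- gcd x P = 1
      rw [coprime_primorial_iff]
      intro i hik hdvd
      rcases Nat.eq_zero_or_pos i with rfl | hi
      · rw [Nat.nth_prime_zero_eq_two] at hdvd; omega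
      · set iF : Fin (k - 1) := ⟨i - 1, by omega⟩ with hiF
        have hiv : (iF : ℕ) + 1 = i := by simp [hiF]; omega
        have hdvd' : Nat.nth Nat.Prime ((iF : ℕ) + 1) ∣ x + 2 * 0 := by
          rw [hiv]; simpa using hdvd
        have h0 := (key iF 0).mpr hdvd'
        apply hres1 iF
        simpa using h0
    · -- gcd (x + m) P = 1
      rw [coprime_primorial_iff]
      intro i hik hdvd
      rcases Nat.eq_zero_or_pos i with rfl | hi
      · rw [Nat.nth_prime_zero_eq_two] at hdvd; omega
      · set iF : Fin (k - 1) := ⟨i - 1, by omega⟩ with hiF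
        have hiv : (iF : ℕ) + 1 = i := by simp [hiF]; omega
        have hdvd' : Nat.nth Nat.Prime ((iF : ℕ) + 1) ∣ x + 2 * (n + 1) := by
          rw [hiv, ← hmn]; exact hdvd
        have h0 := (key iF (n + 1)).mpr hdvd'
        apply hres2 iF
        have hcast : (1 : ℤ) + (n : ℤ) = ((n + 1 : ℕ) : ℤ) := by push_cast; ring
        rw [hcast]
        exact h0
    · -- the gaps
      intro j hj0 hjm
      rcases Nat.even_or_odd j with hje | hjo
      · -- j even, j = 2t
        obtain ⟨t, rfl⟩ := hje
        have ht1 : 1 ≤ t := by omega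
        have htn : t - 1 < n := by omega
        obtain ⟨i, hi⟩ := hcov (t - 1) htn
        have hcast : (1 : ℤ) + ((t - 1 : ℕ) : ℤ) = ((t : ℕ) : ℤ) := by omega
        rw [hcast] at hi
        have hdvd : Nat.nth Nat.Prime ((i : ℕ) + 1) ∣ x + 2 * t := (key i t).mp hi
        have hdvd2 : Nat.nth Nat.Prime ((i : ℕ) + 1) ∣ x + (t + t) := by
          have : x + 2 * t = x + (t + t) := by ring
          rwa [this] at hdvd
        have hdvdP : Nat.nth Nat.Prime ((i : ℕ) + 1) ∣ primorial k :=
          nth_prime_dvd_primorial (by omega)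
        have hdvdg := Nat.dvd_gcd hdvd2 hdvdP
        have hgpos : 0 < Nat.gcd (x + (t + t)) (primorial k) :=
          Nat.gcd_pos_of_pos_left _ (by omega)
        have := Nat.le_of_dvd hgpos hdvdg
        have := (Nat.prime_nth_prime ((i : ℕ) + 1)).two_le
        omega
      · -- j odd: x + j is even
        have h2dvd : 2 ∣ x + j := by
          rw [Nat.odd_iff] at hjo
          omega
        have h2P : 2 ∣ primorial k := by
          have := nth_prime_dvd_primorial (i := 0) (k := k) (by omega)
          rwa [Nat.nth_prime_zero_eq_two] at this
        have hdvdg := Nat.dvd_gcd h2dvd h2P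
        have hgpos : 0 < Nat.gcd (x + j) (primorial k) :=
          Nat.gcd_pos_of_pos_left _ (by omega)
        have := Nat.le_of_dvd hgpos hdvdg
        omega

end PrimorialDifferences
end

section
/- The number 20 does not occur as a difference between consecutive positive integers coprime to the 6-th primorial 30030 = 2·3·5·7·11·13; that is, 20 ∉ D(6). (This disproves de Polignac's conjecture that every even number up to 2·p_{k−1} = 22 occurs as such a difference.) -/
namespace PrimorialDifferences

lemma nth_prime_eq (n p : ℕ) (hp : Nat.Prime p) (hc : Nat.count Nat.Prime p = n) :
    Nat.nth Nat.Prime n = p := by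
  have h := Nat.nth_count (p := Nat.Prime) hp
  rwa [hc] at h

lemma count_eq (n k : ℕ)
    (h : @Nat.count Nat.Prime (fun n => Nat.decidablePrime n) n = k) :
    Nat.count Nat.Prime n = k := by
  convert h using 2

lemma not_dvd_of_gcd (n p : ℕ) (hp : 2 ≤ p) (hd : p ∣ 30030) (h : Nat.gcd n 30030 = 1) :
    ¬ p ∣ n := by
  intro hpn
  have hg : p ∣ Nat.gcd n 30030 := Nat.dvd_gcd hpn hd
  rw [h] at hg
  exact absurd (Nat.le_of_dvd one_pos hg) (by omega)

lemma dvd_of_gcd (n : ℕ) (h : 1 < Nat.gcd n 30030) :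
    2 ∣ n ∨ 3 ∣ n ∨ 5 ∣ n ∨ 7 ∣ n ∨ 11 ∣ n ∨ 13 ∣ n := by
  by_contra hc
  push_neg at hc
  obtain ⟨h2, h3, h5, h7, h11, h13⟩ := hc
  have c2 : Nat.Coprime n 2 := ((Nat.Prime.coprime_iff_not_dvd (by norm_num)).2 h2).symm
  have c3 : Nat.Coprime n 3 := ((Nat.Prime.coprime_iff_not_dvd (by norm_num)).2 h3).symm
  have c5 : Nat.Coprime n 5 := ((Nat.Prime.coprime_iff_not_dvd (by norm_num)).2 h5).symm
  have c7 : Nat.Coprime n 7 := ((Nat.Prime.coprime_iff_not_dvd (by norm_num)).2 h7).symm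
  have c11 : Nat.Coprime n 11 := ((Nat.Prime.coprime_iff_not_dvd (by norm_num)).2 h11).symm
  have c13 : Nat.Coprime n 13 := ((Nat.Prime.coprime_iff_not_dvd (by norm_num)).2 h13).symm
  have hco : Nat.Coprime n 30030 := by
    rw [show (30030 : ℕ) = 2 * 3 * 5 * 7 * 11 * 13 by norm_num]
    exact ((((c2.mul_right c3).mul_right c5).mul_right c7).mul_right c11).mul_right c13
  rw [Nat.Coprime] at hco
  omega

set_option maxHeartbeats 1600000 in
lemma prune (x j : ℕ) (hj2 : j % 2 = 0) (hj3 : j % 3 ≠ 1) (hx2 : ¬ 2 ∣ x) (hx3 : x % 3 = 2)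
    (d : 2 ∣ (x + j) ∨ 3 ∣ (x + j) ∨ 5 ∣ (x + j) ∨ 7 ∣ (x + j) ∨ 11 ∣ (x + j) ∨ 13 ∣ (x + j)) :
    5 ∣ (x + j) ∨ 7 ∣ (x + j) ∨ 11 ∣ (x + j) ∨ 13 ∣ (x + j) := by
  omega

set_option maxHeartbeats 1600000 in
lemma no5 (x j r : ℕ) (h : x % 5 = r) (hne : (r + j) % 5 ≠ 0) : ¬ 5 ∣ (x + j) := by
  omega

set_option maxHeartbeats 1600000 in
lemma branch1 (x : ℕ)
    (n7 : ¬ 7 ∣ x) (n11 : ¬ 11 ∣ x) (n13 : ¬ 13 ∣ x)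
    (m7 : ¬ 7 ∣ (x + 20)) (m11 : ¬ 11 ∣ (x + 20)) (m13 : ¬ 13 ∣ (x + 20))
    (r2 : 7 ∣ (x + 2) ∨ 11 ∣ (x + 2) ∨ 13 ∣ (x + 2))
    (r6 : 7 ∣ (x + 6) ∨ 11 ∣ (x + 6) ∨ 13 ∣ (x + 6))
    (r8 : 7 ∣ (x + 8) ∨ 11 ∣ (x + 8) ∨ 13 ∣ (x + 8))
    (r12 : 7 ∣ (x + 12) ∨ 11 ∣ (x + 12) ∨ 13 ∣ (x + 12))
    (r18 : 7 ∣ (x + 18) ∨ 11 ∣ (x + 18) ∨ 13 ∣ (x + 18)) : False := by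
  omega

set_option maxHeartbeats 1600000 in
lemma branch2 (x : ℕ)
    (n7 : ¬ 7 ∣ x) (n11 : ¬ 11 ∣ x) (n13 : ¬ 13 ∣ x)
    (m7 : ¬ 7 ∣ (x + 20)) (m11 : ¬ 11 ∣ (x + 20)) (m13 : ¬ 13 ∣ (x + 20))
    (r2 : 7 ∣ (x + 2) ∨ 11 ∣ (x + 2) ∨ 13 ∣ (x + 2))
    (r6 : 7 ∣ (x + 6) ∨ 11 ∣ (x + 6) ∨ 13 ∣ (x + 6))
    (r12 : 7 ∣ (x + 12) ∨ 11 ∣ (x + 12) ∨ 13 ∣ (x + 12))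
    (r14 : 7 ∣ (x + 14) ∨ 11 ∣ (x + 14) ∨ 13 ∣ (x + 14)) : False := by
  omega

set_option maxHeartbeats 1600000 in
lemma branch3 (x : ℕ)
    (n7 : ¬ 7 ∣ x) (n11 : ¬ 11 ∣ x) (n13 : ¬ 13 ∣ x)
    (m7 : ¬ 7 ∣ (x + 20)) (m11 : ¬ 11 ∣ (x + 20)) (m13 : ¬ 13 ∣ (x + 20))
    (r6 : 7 ∣ (x + 6) ∨ 11 ∣ (x + 6) ∨ 13 ∣ (x + 6))
    (r8 : 7 ∣ (x + 8) ∨ 11 ∣ (x + 8) ∨ 13 ∣ (x + 8))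
    (r14 : 7 ∣ (x + 14) ∨ 11 ∣ (x + 14) ∨ 13 ∣ (x + 14))
    (r18 : 7 ∣ (x + 18) ∨ 11 ∣ (x + 18) ∨ 13 ∣ (x + 18)) : False := by
  omega

set_option maxHeartbeats 1600000 in
lemma branch4 (x : ℕ)
    (n7 : ¬ 7 ∣ x) (n11 : ¬ 11 ∣ x) (n13 : ¬ 13 ∣ x)
    (m7 : ¬ 7 ∣ (x + 20)) (m11 : ¬ 11 ∣ (x + 20)) (m13 : ¬ 13 ∣ (x + 20))
    (r2 : 7 ∣ (x + 2) ∨ 11 ∣ (x + 2) ∨ 13 ∣ (x + 2))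
    (r8 : 7 ∣ (x + 8) ∨ 11 ∣ (x + 8) ∨ 13 ∣ (x + 8))
    (r12 : 7 ∣ (x + 12) ∨ 11 ∣ (x + 12) ∨ 13 ∣ (x + 12))
    (r14 : 7 ∣ (x + 14) ∨ 11 ∣ (x + 14) ∨ 13 ∣ (x + 14))
    (r18 : 7 ∣ (x + 18) ∨ 11 ∣ (x + 18) ∨ 13 ∣ (x + 18)) : False := by
  omega

set_option maxHeartbeats 1600000 in
theorem twenty_not_mem_D_six : primorial 6 = 30030 ∧ ¬ memD 6 20 := by
  have e0 : Nat.nth Nat.Prime 0 = 2 := nth_prime_eq 0 2 (by norm_num) (count_eq 2 0 (by decide))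
  have e1 : Nat.nth Nat.Prime 1 = 3 := nth_prime_eq 1 3 (by norm_num) (count_eq 3 1 (by decide))
  have e2 : Nat.nth Nat.Prime 2 = 5 := nth_prime_eq 2 5 (by norm_num) (count_eq 5 2 (by decide))
  have e3 : Nat.nth Nat.Prime 3 = 7 := nth_prime_eq 3 7 (by norm_num) (count_eq 7 3 (by decide))
  have e4 : Nat.nth Nat.Prime 4 = 11 := nth_prime_eq 4 11 (by norm_num) (count_eq 11 4 (by decide))
  have e5 : Nat.nth Nat.Prime 5 = 13 := nth_prime_eq 5 13 (by norm_num) (count_eq 13 5 (by decide))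
  have hP : primorial 6 = 30030 := by
    rw [primorial]
    rw [Finset.prod_range_succ, Finset.prod_range_succ, Finset.prod_range_succ,
      Finset.prod_range_succ, Finset.prod_range_succ, Finset.prod_range_succ,
      Finset.prod_range_zero, e0, e1, e2, e3, e4, e5]
    norm_num
  refine ⟨hP, ?_⟩
  rintro ⟨x, hx, h1, h2, hall⟩
  rw [hP] at h1 h2
  simp only [hP] at hall
  have n2 := not_dvd_of_gcd x 2 (by norm_num) (by norm_num) h1
  have n3 := not_dvd_of_gcd x 3 (by norm_num) (by norm_num) h1
  have n5 := not_dvd_of_gcd x 5 (by norm_num) (by norm_num) h1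
  have n7 := not_dvd_of_gcd x 7 (by norm_num) (by norm_num) h1
  have n11 := not_dvd_of_gcd x 11 (by norm_num) (by norm_num) h1
  have n13 := not_dvd_of_gcd x 13 (by norm_num) (by norm_num) h1
  have m2 := not_dvd_of_gcd (x + 20) 2 (by norm_num) (by norm_num) h2
  have m3 := not_dvd_of_gcd (x + 20) 3 (by norm_num) (by norm_num) h2
  have m5 := not_dvd_of_gcd (x + 20) 5 (by norm_num) (by norm_num) h2
  have m7 := not_dvd_of_gcd (x + 20) 7 (by norm_num) (by norm_num) h2
  have m11 := not_dvd_of_gcd (x + 20) 11 (by norm_num) (by norm_num) h2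
  have m13 := not_dvd_of_gcd (x + 20) 13 (by norm_num) (by norm_num) h2
  have d2 := dvd_of_gcd (x + 2) (hall 2 (by norm_num) (by norm_num))
  have d6 := dvd_of_gcd (x + 6) (hall 6 (by norm_num) (by norm_num))
  have d8 := dvd_of_gcd (x + 8) (hall 8 (by norm_num) (by norm_num))
  have d12 := dvd_of_gcd (x + 12) (hall 12 (by norm_num) (by norm_num))
  have d14 := dvd_of_gcd (x + 14) (hall 14 (by norm_num) (by norm_num))
  have d18 := dvd_of_gcd (x + 18) (hall 18 (by norm_num) (by norm_num))
  have h3 : x % 3 = 2 := by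
    clear d2 d6 d8 d12 d14 d18
    omega
  have p2 := prune x 2 (by norm_num) (by norm_num) n2 h3 d2
  have p6 := prune x 6 (by norm_num) (by norm_num) n2 h3 d6
  have p8 := prune x 8 (by norm_num) (by norm_num) n2 h3 d8
  have p12 := prune x 12 (by norm_num) (by norm_num) n2 h3 d12
  have p14 := prune x 14 (by norm_num) (by norm_num) n2 h3 d14
  have p18 := prune x 18 (by norm_num) (by norm_num) n2 h3 d18
  clear d2 d6 d8 d12 d14 d18 n2 n3 m2 m3 h1 h2 hall hx
  have q5 : x % 5 = 1 ∨ x % 5 = 2 ∨ x % 5 = 3 ∨ x % 5 = 4 := by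
    clear p2 p6 p8 p12 p14 p18
    omega
  rcases q5 with h5 | h5 | h5 | h5
  ·
    have r2 := p2.resolve_left (no5 x 2 1 h5 (by norm_num))
    have r6 := p6.resolve_left (no5 x 6 1 h5 (by norm_num))
    have r8 := p8.resolve_left (no5 x 8 1 h5 (by norm_num))
    have r12 := p12.resolve_left (no5 x 12 1 h5 (by norm_num))
    have r18 := p18.resolve_left (no5 x 18 1 h5 (by norm_num))
    exact branch1 x n7 n11 n13 m7 m11 m13 r2 r6 r8 r12 r18
  ·
    have r2 := p2.resolve_left (no5 x 2 2 h5 (by norm_num))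
    have r6 := p6.resolve_left (no5 x 6 2 h5 (by norm_num))
    have r12 := p12.resolve_left (no5 x 12 2 h5 (by norm_num))
    have r14 := p14.resolve_left (no5 x 14 2 h5 (by norm_num))
    exact branch2 x n7 n11 n13 m7 m11 m13 r2 r6 r12 r14
  ·
    have r6 := p6.resolve_left (no5 x 6 3 h5 (by norm_num))
    have r8 := p8.resolve_left (no5 x 8 3 h5 (by norm_num))
    have r14 := p14.resolve_left (no5 x 14 3 h5 (by norm_num))
    have r18 := p18.resolve_left (no5 x 18 3 h5 (by norm_num))
    exact branch3 x n7 n11 n13 m7 m11 m13 r6 r8 r14 r18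
  ·
    have r2 := p2.resolve_left (no5 x 2 4 h5 (by norm_num))
    have r8 := p8.resolve_left (no5 x 8 4 h5 (by norm_num))
    have r12 := p12.resolve_left (no5 x 12 4 h5 (by norm_num))
    have r14 := p14.resolve_left (no5 x 14 4 h5 (by norm_num))
    have r18 := p18.resolve_left (no5 x 18 4 h5 (by norm_num))
    exact branch4 x n7 n11 n13 m7 m11 m13 r2 r8 r12 r14 r18

end PrimorialDifferences
end

section
/- For every even positive integer m there exists k ≥ 1 such that m occurs as a difference between consecutive positive integers coprime to p_k#; in fact one may take k = m/2, so that m ∈ D(m/2), and then m ∈ D(k) for all k ≥ m/2. -/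
namespace PrimorialDifferences

local notation "q" => Nat.nth Nat.Prime

lemma qp (i : ℕ) : (q i).Prime := Nat.prime_nth_prime i

lemma q_mono : StrictMono q := Nat.nth_strictMono Nat.infinite_setOf_prime

lemma q_two_le (i : ℕ) : 2 ≤ q i := (qp i).two_le

lemma q_ge_three {i : ℕ} (hi : 1 ≤ i) : 3 ≤ q i := by
  have h0 : q 0 < q i := q_mono (by omega)
  rw [Nat.nth_prime_zero_eq_two] at h0; omega

lemma q_odd {i : ℕ} (hi : 1 ≤ i) : ¬ (2 ∣ q i) := by
  intro h
  have h2 := (Nat.prime_dvd_prime_iff_eq Nat.prime_two (qp i)).mp h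
  have := q_ge_three hi; omega

lemma q_lb : ∀ i : ℕ, 1 ≤ i → 2 * i + 1 ≤ q i := by
  intro i
  induction i with
  | zero => omega
  | succ n ih =>
    intro _
    rcases Nat.eq_zero_or_pos n with h | h
    · subst h; simp [Nat.nth_prime_one_eq_three]
    · have h1 := ih h
      have h2 : q n < q (n + 1) := q_mono (by omega)
      -- both odd, so they differ by at least 2
      have h3 : ¬ (2 ∣ q n) := q_odd h
      have h4 : ¬ (2 ∣ q (n + 1)) := q_odd (by omega)
      by_contra h5
      have h6 : q (n + 1) = q n + 1 := by omega
      omega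

lemma primorial_pos (k : ℕ) : 0 < primorial k :=
  Finset.prod_pos fun i _ => (qp i).pos

lemma dvd_primorial {i k : ℕ} (h : i < k) : q i ∣ primorial k :=
  Finset.dvd_prod_of_mem _ (Finset.mem_range.mpr h)

lemma two_dvd_primorial_s19 {k : ℕ} (h : 1 ≤ k) : 2 ∣ primorial k := by
  have := dvd_primorial (i := 0) (k := k) h
  rwa [Nat.nth_prime_zero_eq_two] at this

lemma primorial_succ (k : ℕ) : primorial (k + 1) = primorial k * q k :=
  Finset.prod_range_succ _ _

lemma gcd_eq_of_modEq {a b n : ℕ} (h : a ≡ b [MOD n]) : Nat.gcd a n = Nat.gcd b n := by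
  rw [Nat.gcd_comm a n, Nat.gcd_comm b n, Nat.gcd_rec n a, Nat.gcd_rec n b, h]

lemma one_lt_gcd {d a b : ℕ} (hd : 2 ≤ d) (h1 : d ∣ a) (h2 : d ∣ b) (hb : 0 < b) :
    1 < Nat.gcd a b :=
  lt_of_lt_of_le hd (Nat.le_of_dvd (Nat.gcd_pos_of_pos_right _ hb) (Nat.dvd_gcd h1 h2))

/-- CRT for the first `k` primes. -/
lemma crt (k : ℕ) (r : ℕ → ℕ) : ∃ x : ℕ, ∀ i < k, x ≡ r i [MOD q i] := by
  have hs : ∀ i ∈ Finset.range k, q i ≠ 0 := fun i _ => (qp i).pos.ne'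
  have pp : (↑(Finset.range k) : Set ℕ).Pairwise (Function.onFun Nat.Coprime q) := by
    intro i _ j _ hij
    exact (Nat.coprime_primes (qp i) (qp j)).mpr (q_mono.injective.ne hij)
  obtain ⟨x, hx⟩ := Nat.chineseRemainderOfFinset r q (Finset.range k) hs pp
  exact ⟨x, fun i hi => hx i (Finset.mem_range.mpr hi)⟩

lemma coprime_of_modEq_one_mod_prime {i y c : ℕ} (hc : y ≡ c [MOD q i]) (h0 : c ≠ 0)
    (hlt : c < q i) : Nat.Coprime y (q i) := by
  rw [Nat.coprime_comm]
  refine ((qp i).coprime_iff_not_dvd).mpr ?_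
  intro hd
  have : y ≡ 0 [MOD q i] := Nat.modEq_zero_iff_dvd.mpr hd
  have hc0 : c ≡ 0 [MOD q i] := (hc.symm.trans this).symm.symm
  have : c % q i = 0 % q i := hc0
  rw [Nat.mod_eq_of_lt hlt, Nat.zero_mod] at this
  exact h0 this

lemma memD_succ {k m : ℕ} (hk : 1 ≤ k) (h : memD k m) : memD (k + 1) m := by
  obtain ⟨x, hx0, hx1, hx2, hx3⟩ := h
  have hq3 : 3 ≤ q k := q_ge_three hk
  have hqpos : q k ≠ 0 := by omega
  -- choose c ∈ {1,2} with c + m ≢ 0 mod q k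
  set c : ℕ := if (1 + m) % q k = 0 then 2 else 1 with hc
  have hc0 : c ≠ 0 := by rw [hc]; split <;> omega
  have hclt : c < q k := by rw [hc]; split <;> omega
  have hcm : (c + m) % q k ≠ 0 := by
    by_cases h1 : (1 + m) % q k = 0
    · simp only [hc, if_pos h1]
      intro h2
      have d1 : q k ∣ 1 + m := Nat.dvd_of_mod_eq_zero h1
      have d2 : q k ∣ 2 + m := Nat.dvd_of_mod_eq_zero h2
      have d3 : q k ∣ (2 + m) - (1 + m) := Nat.dvd_sub d2 d1
      have d4 : (2 + m) - (1 + m) = 1 := by omega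
      rw [d4] at d3
      have h5 := Nat.dvd_one.mp d3
      omega
    · simp only [hc, if_neg h1]; exact h1
  -- CRT combine
  have hco : (primorial k).Coprime (q k) := by
    rw [primorial]
    refine Nat.Coprime.prod_left fun i hi => ?_
    exact (Nat.coprime_primes (qp i) (qp k)).mpr
      (q_mono.injective.ne (by simp at hi; omega))
  obtain ⟨y₀, hy1, hy2⟩ := Nat.chineseRemainder hco x c
  set y : ℕ := y₀ + primorial (k + 1) * (q k) with hy
  have hyx : y ≡ x [MOD primorial k] := by
    have : primorial k ∣ primorial (k + 1) * q k :=
      Dvd.dvd.mul_right (by rw [primorial_succ]; exact Dvd.intro _ rfl) _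
    calc y ≡ y₀ + 0 [MOD primorial k] :=
          Nat.ModEq.add_left _ (Nat.modEq_zero_iff_dvd.mpr this)
      _ = y₀ := by omega
      _ ≡ x [MOD primorial k] := hy1
  have hyc : y ≡ c [MOD q k] := by
    have : q k ∣ primorial (k + 1) * q k := Dvd.intro_left _ rfl
    calc y ≡ y₀ + 0 [MOD q k] := Nat.ModEq.add_left _ (Nat.modEq_zero_iff_dvd.mpr this)
      _ = y₀ := by omega
      _ ≡ c [MOD q k] := hy2
  have hyP : 0 < y := by
    have := primorial_pos (k + 1)
    have : 0 < primorial (k + 1) * q k := Nat.mul_pos this (by omega)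
    omega
  refine ⟨y, hyP, ?_, ?_, ?_⟩
  · rw [primorial_succ, Nat.Coprime.gcd_eq_one]
    exact Nat.Coprime.mul_right
      (by rw [Nat.coprime_iff_gcd_eq_one, gcd_eq_of_modEq hyx]; exact hx1)
      (coprime_of_modEq_one_mod_prime hyc hc0 hclt)
  · rw [primorial_succ, Nat.Coprime.gcd_eq_one]
    refine Nat.Coprime.mul_right ?_ ?_
    · rw [Nat.coprime_iff_gcd_eq_one, gcd_eq_of_modEq (hyx.add_right m)]; exact hx2
    · refine coprime_of_modEq_one_mod_prime (c := (c + m) % q k) ?_ hcm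
        (Nat.mod_lt _ (by omega))
      exact (hyc.add_right m).trans (Nat.mod_modEq _ _).symm
  · intro j hj hjm
    have h1 : 1 < Nat.gcd (y + j) (primorial k) := by
      rw [gcd_eq_of_modEq (hyx.add_right j)]; exact hx3 j hj hjm
    have h2 : Nat.gcd (y + j) (primorial k) ∣ Nat.gcd (y + j) (primorial (k + 1)) :=
      Nat.dvd_gcd (Nat.gcd_dvd_left _ _)
        ((Nat.gcd_dvd_right _ _).trans (by rw [primorial_succ]; exact Dvd.intro _ rfl))
    have h3 : 0 < Nat.gcd (y + j) (primorial (k + 1)) :=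
      Nat.gcd_pos_of_pos_right _ (primorial_pos _)
    have := Nat.le_of_dvd h3 h2
    omega

/-- Assign to each odd prime `q (i+1)`, `i < n-1`, a distinct position `a ∈ [1, n-1]`
with `q (i+1) ∤ a` and `q (i+1) ∤ n - a`, via Hall's marriage theorem. -/
lemma exists_assignment (n : ℕ) :
    ∃ f : Fin (n - 1) → ℕ, Function.Injective f ∧
      ∀ i : Fin (n - 1), f i ∈ Finset.Icc 1 (n - 1) ∧ ¬ q ((i : ℕ) + 1) ∣ f i ∧
        ¬ q ((i : ℕ) + 1) ∣ (n - f i) := by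
  classical
  set t : Fin (n - 1) → Finset ℕ := fun i =>
    (Finset.Icc 1 (n - 1)).filter
      (fun a => ¬ q ((i : ℕ) + 1) ∣ a ∧ ¬ q ((i : ℕ) + 1) ∣ (n - a)) with ht
  have hall : ∀ s : Finset (Fin (n - 1)), s.card ≤ (s.biUnion t).card := by
    intro s
    rcases s.eq_empty_or_nonempty with rfl | hs
    · simp
    have hn2 : 2 ≤ n := by
      obtain ⟨i, _⟩ := hs; have := i.isLt; omega
    set j := s.max' hs with hj
    set Q := q ((j : ℕ) + 1) with hQ
    have hQ3 : 3 ≤ Q := q_ge_three (by omega)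
    have hscard : s.card ≤ (j : ℕ) + 1 := by
      have h1 : s.image (Fin.val) ⊆ Finset.range ((j : ℕ) + 1) := by
        intro a ha
        simp only [Finset.mem_image] at ha
        obtain ⟨i, hi, rfl⟩ := ha
        have h2 : i ≤ j := Finset.le_max' s i hi
        simp only [Finset.mem_range]
        exact Nat.lt_succ_of_le h2
      calc s.card = (s.image Fin.val).card :=
            (Finset.card_image_of_injective _ Fin.val_injective).symm
        _ ≤ (Finset.range ((j : ℕ) + 1)).card := Finset.card_le_card h1
        _ = (j : ℕ) + 1 := Finset.card_range _
    have hsub : t j ⊆ s.biUnion t := Finset.subset_biUnion_of_mem t (s.max'_mem hs)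
    have hmain : s.card ≤ (t j).card := by
      rcases le_or_gt Q (n - 1) with hQn | hQn
      · -- small prime case
        set d := (n - 1) / Q with hd
        have hdQ : d * Q ≤ (n - 1) := Nat.div_mul_le_self (n - 1) Q
        have hd1 : 1 ≤ d := (Nat.one_le_div_iff (by omega)).mpr hQn
        have hIoc : Finset.Icc 1 (n - 1) = Finset.Ioc 0 (n - 1) := by
          ext a; simp [Finset.mem_Icc, Finset.mem_Ioc]; omega
        have hc1 : ((Finset.Icc 1 (n - 1)).filter (fun a => Q ∣ a)).card = d := by
          rw [hd, hIoc]; exact Nat.Ioc_filter_dvd_card_eq_div (n - 1) Q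
        have hc2 : ((Finset.Icc 1 (n - 1)).filter (fun a => Q ∣ (n - a))).card ≤ d := by
          rw [← hc1]
          apply Finset.card_le_card_of_injOn (fun a => n - a)
          · intro a ha
            simp only [Finset.mem_coe, Finset.mem_filter, Finset.mem_Icc] at ha ⊢
            refine ⟨⟨by omega, by omega⟩, ha.2⟩
          · intro a ha b hb hab
            simp only [Finset.coe_filter, Set.mem_setOf_eq, Finset.mem_Icc] at ha hb
            simp only at hab
            omega
        have hcomp : ((Finset.Icc 1 (n - 1)).filter
            (fun a => ¬(¬ Q ∣ a ∧ ¬ Q ∣ (n - a)))).card ≤ 2 * d := by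
          have hsub2 : ((Finset.Icc 1 (n - 1)).filter (fun a => ¬(¬ Q ∣ a ∧ ¬ Q ∣ (n - a)))) ⊆
              ((Finset.Icc 1 (n - 1)).filter (fun a => Q ∣ a)) ∪
                ((Finset.Icc 1 (n - 1)).filter (fun a => Q ∣ (n - a))) := by
            intro a ha
            simp only [Finset.mem_filter, Finset.mem_union] at ha ⊢
            tauto
          calc _ ≤ _ := Finset.card_le_card hsub2
            _ ≤ _ + _ := Finset.card_union_le _ _
            _ ≤ 2 * d := by omega
        have htj : (n - 1) ≤ (t j).card + 2 * d := by
          have heq := Finset.card_filter_add_card_filter_not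
            (s := Finset.Icc 1 (n - 1)) (p := fun a => ¬ Q ∣ a ∧ ¬ Q ∣ (n - a))
          have hcard : (Finset.Icc 1 (n - 1)).card = (n - 1) := by
            rw [Nat.card_Icc]; omega
          have : (t j).card = ((Finset.Icc 1 (n - 1)).filter
              (fun a => ¬ Q ∣ a ∧ ¬ Q ∣ (n - a))).card := by
            simp only [ht, hQ]
          omega
        -- arithmetic: (Q-1)/2 + 2*d ≤ (n - 1)
        have hlb := q_lb ((j : ℕ) + 1) (by omega)
        rw [← hQ] at hlb
        set e := (Q - 1) / 2 with he
        have hje : (j : ℕ) + 1 ≤ e := by omega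
        have he1 : 1 ≤ e := by omega
        have f1 : e ≤ e * d := Nat.le_mul_of_pos_right e hd1
        have f2 : d ≤ e * d := Nat.le_mul_of_pos_left d he1
        have f3 : (2 * e + 1) * d ≤ Q * d := Nat.mul_le_mul_right d (by omega)
        have f4 : (2 * e + 1) * d = 2 * (e * d) + d := by ring
        have f5 : Q * d = d * Q := mul_comm Q d
        omega
      · -- big prime case: every position is allowed
        have hsub3 : Finset.Icc 1 (n - 1) ⊆ t j := by
          intro a ha
          rw [ht]
          simp only [Finset.mem_filter]
          rw [Finset.mem_Icc] at ha
          refine ⟨Finset.mem_Icc.mpr ha, ?_, ?_⟩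
          · intro hdv; have := Nat.le_of_dvd (by omega) hdv; omega
          · intro hdv; have := Nat.le_of_dvd (by omega) hdv; omega
        have h2 : n - 1 ≤ (t j).card := by
          have h3 := Finset.card_le_card hsub3
          rw [Nat.card_Icc] at h3
          omega
        have h3 : s.card ≤ n - 1 := by
          have h4 := Finset.card_le_univ s
          rwa [Fintype.card_fin] at h4
        omega
    exact hmain.trans (Finset.card_le_card hsub)
  obtain ⟨f, hinj, hft⟩ := (Finset.all_card_le_biUnion_card_iff_exists_injective t).mp hall
  refine ⟨f, hinj, fun i => ?_⟩
  have h5 := hft i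
  rw [ht] at h5
  simp only [Finset.mem_filter] at h5
  exact ⟨h5.1, h5.2.1, h5.2.2⟩

lemma memD_even (n : ℕ) (hn : 1 ≤ n) : memD n (2 * n) := by
  classical
  obtain ⟨f, hfinj, hf⟩ := exists_assignment n
  -- g i = position assigned to the prime q i, for 1 ≤ i ≤ n-1
  set g : ℕ → ℕ := fun i => if h : i - 1 < n - 1 then f ⟨i - 1, h⟩ else 0 with hg
  set r : ℕ → ℕ := fun i => if i = 0 then 1 else 2 * g i * (q i - 1) with hr
  obtain ⟨x₀, hx₀⟩ := crt n r
  set x := x₀ + primorial n with hxdef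
  have hmod : ∀ i < n, x ≡ r i [MOD q i] := by
    intro i hi
    have h1 : x ≡ x₀ + 0 [MOD q i] :=
      Nat.ModEq.add_left _ (Nat.modEq_zero_iff_dvd.mpr (dvd_primorial hi))
    simpa using h1.trans (hx₀ i hi)
  have hg_spec : ∀ i, 1 ≤ i → i < n →
      1 ≤ g i ∧ g i ≤ n - 1 ∧ ¬ q i ∣ g i ∧ ¬ q i ∣ (n - g i) := by
    intro i h1 h2
    have hlt : i - 1 < n - 1 := by omega
    have h3 := hf ⟨i - 1, hlt⟩
    have h4 : g i = f ⟨i - 1, hlt⟩ := by rw [hg]; simp [hlt]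
    have h5 : (⟨i - 1, hlt⟩ : Fin (n - 1)).val + 1 = i := by simp; omega
    rw [h5] at h3
    rw [h4]
    rw [Finset.mem_Icc] at h3
    exact ⟨h3.1.1, h3.1.2, h3.2.1, h3.2.2⟩
  -- x is odd
  have hodd : x % 2 = 1 := by
    have h1 := hmod 0 hn
    rw [Nat.nth_prime_zero_eq_two] at h1
    have : r 0 = 1 := by simp [hr]
    rw [this] at h1
    simpa [Nat.ModEq] using h1
  -- key divisibility facts for 1 ≤ i < n
  have hdvd : ∀ i, 1 ≤ i → i < n → q i ∣ x + 2 * g i := by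
    intro i h1 h2
    have h := (hmod i h2).add_right (2 * g i)
    have hq1 : 1 ≤ q i := (qp i).pos
    obtain ⟨q', hq'⟩ : ∃ q', q i = q' + 1 := ⟨q i - 1, by omega⟩
    have e1 : r i + 2 * g i = 2 * g i * q i := by
      rw [hr]
      simp only [if_neg (by omega : ¬ i = 0)]
      rw [hq', Nat.add_sub_cancel]; ring
    rw [← Nat.modEq_zero_iff_dvd]
    calc x + 2 * g i ≡ r i + 2 * g i [MOD q i] := h
      _ = 2 * g i * q i := e1
      _ ≡ 0 [MOD q i] := Nat.modEq_zero_iff_dvd.mpr ⟨2 * g i, mul_comm _ _⟩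
  have hnd1 : ∀ i, 1 ≤ i → i < n → ¬ q i ∣ x := by
    intro i h1 h2 hd
    have h0 : x ≡ 0 [MOD q i] := Nat.modEq_zero_iff_dvd.mpr hd
    have h3 : q i ∣ r i := Nat.modEq_zero_iff_dvd.mp ((hmod i h2).symm.trans h0)
    rw [hr] at h3
    simp only [if_neg (by omega : ¬ i = 0)] at h3
    have hq3 : 3 ≤ q i := q_ge_three h1
    obtain ⟨hg1, hg2, hg3, hg4⟩ := hg_spec i h1 h2
    rcases (qp i).dvd_mul.mp h3 with h4 | h4
    · rcases (qp i).dvd_mul.mp h4 with h5 | h5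
      · have := Nat.le_of_dvd (by omega) h5; omega
      · exact hg3 h5
    · have := Nat.le_of_dvd (by omega) h4; omega
  have hnd2 : ∀ i, 1 ≤ i → i < n → ¬ q i ∣ x + 2 * n := by
    intro i h1 h2 hd
    have hq3 : 3 ≤ q i := q_ge_three h1
    obtain ⟨hg1, hg2, hg3, hg4⟩ := hg_spec i h1 h2
    have h0 : x + 2 * n ≡ 0 [MOD q i] := Nat.modEq_zero_iff_dvd.mpr hd
    have h3 : q i ∣ r i + 2 * n :=
      Nat.modEq_zero_iff_dvd.mp ((((hmod i h2).add_right (2 * n)).symm.trans h0))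
    obtain ⟨q', hq'⟩ : ∃ q', q i = q' + 1 := ⟨q i - 1, by omega⟩
    obtain ⟨b, hb⟩ : ∃ b, n = g i + b := ⟨n - g i, by omega⟩
    have e2 : r i + 2 * n = 2 * g i * q i + 2 * b := by
      rw [hr]
      simp only [if_neg (by omega : ¬ i = 0)]
      rw [hq', Nat.add_sub_cancel, hb]; ring
    rw [e2] at h3
    have h5 : q i ∣ 2 * g i * q i := Dvd.intro_left _ rfl
    have h6 : q i ∣ 2 * b := (Nat.dvd_add_right h5).mp h3
    have hbg : b = n - g i := by omega
    rcases (qp i).dvd_mul.mp h6 with h7 | h7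
    · have := Nat.le_of_dvd (by omega) h7; omega
    · rw [hbg] at h7; exact hg4 h7
  -- surjectivity of f onto positions
  have hsurj : ∀ a, 1 ≤ a → a ≤ n - 1 → ∃ i : Fin (n - 1), f i = a := by
    intro a ha1 ha2
    have himg : Finset.image f Finset.univ = Finset.Icc 1 (n - 1) := by
      apply Finset.eq_of_subset_of_card_le
      · intro b hb
        simp only [Finset.mem_image] at hb
        obtain ⟨i, _, rfl⟩ := hb
        exact (hf i).1
      · rw [Finset.card_image_of_injective _ hfinj, Finset.card_univ, Fintype.card_fin,
          Nat.card_Icc]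
        omega
    have ha : a ∈ Finset.image f Finset.univ := by
      rw [himg, Finset.mem_Icc]; exact ⟨ha1, ha2⟩
    simp only [Finset.mem_image] at ha
    obtain ⟨i, _, hi⟩ := ha
    exact ⟨i, hi⟩
  -- assemble
  have hxpos : 0 < x := by
    have := primorial_pos n; omega
  refine ⟨x, hxpos, ?_, ?_, ?_⟩
  · show Nat.gcd x (primorial n) = 1
    rw [primorial]
    refine Nat.Coprime.prod_right fun i hi => ?_
    rw [Finset.mem_range] at hi
    rcases Nat.eq_zero_or_pos i with rfl | h1
    · rw [Nat.nth_prime_zero_eq_two, Nat.coprime_comm]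
      refine (Nat.prime_two.coprime_iff_not_dvd).mpr ?_
      intro h; omega
    · rw [Nat.coprime_comm]
      exact ((qp i).coprime_iff_not_dvd).mpr (hnd1 i h1 hi)
  · show Nat.gcd (x + 2 * n) (primorial n) = 1
    rw [primorial]
    refine Nat.Coprime.prod_right fun i hi => ?_
    rw [Finset.mem_range] at hi
    rcases Nat.eq_zero_or_pos i with rfl | h1
    · rw [Nat.nth_prime_zero_eq_two, Nat.coprime_comm]
      refine (Nat.prime_two.coprime_iff_not_dvd).mpr ?_
      intro h; omega
    · rw [Nat.coprime_comm]
      exact ((qp i).coprime_iff_not_dvd).mpr (hnd2 i h1 hi)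
  · intro j hj hjm
    rcases Nat.even_or_odd j with he | ho
    · -- j even, j = 2a with 1 ≤ a ≤ n-1
      obtain ⟨a, rfl⟩ := he
      have ha1 : 1 ≤ a := by omega
      have ha2 : a ≤ n - 1 := by omega
      obtain ⟨i, hi⟩ := hsurj a ha1 ha2
      have hgi : g ((i : ℕ) + 1) = a := by
        rw [hg]
        simp only [Nat.add_sub_cancel, dif_pos i.isLt, Fin.eta, hi]
      have h1 : 1 ≤ (i : ℕ) + 1 := by omega
      have h2 : (i : ℕ) + 1 < n := by have := i.isLt; omega
      have h3 := hdvd _ h1 h2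
      rw [hgi] at h3
      refine one_lt_gcd (q_two_le _) ?_ (dvd_primorial h2) (primorial_pos n)
      have : a + a = 2 * a := by ring
      rw [this]
      exact h3
    · -- j odd : x + j is even
      have h1 : 2 ∣ x + j := by
        rcases ho with ⟨c, rfl⟩
        omega
      exact one_lt_gcd le_rfl h1 (two_dvd_primorial_s19 hn) (primorial_pos n)

theorem every_even_eventually_mem_D (m : ℕ) (hm : 1 ≤ m) (heven : Even m) :
    memD (m / 2) m ∧ ∀ k : ℕ, m / 2 ≤ k → memD k m := by
  obtain ⟨n, rfl⟩ := heven
  have hn : 1 ≤ n := by omega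
  have hhalf : (n + n) / 2 = n := by omega
  have hbase : memD n (n + n) := by
    have h := memD_even n hn
    rwa [show 2 * n = n + n by ring] at h
  rw [hhalf]
  refine ⟨hbase, ?_⟩
  intro k hk
  induction k, hk using Nat.le_induction with
  | base => exact hbase
  | succ k hk ih => exact memD_succ (by omega) ih

end PrimorialDifferences
end
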